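/- arXiv:2308.11663 — 6 statements merged into one kernel-verified Lean document; each statement's English description precedes it below -/
import Mathlib

section
/- For every m ≥ 2, the disjoint union of m copies of the path P_3 is not antimagic. -/
open SimpleGraph

/-- The direct (tensor) product of two simple graphs. -/
def tensorProd {α β : Type*} (G : SimpleGraph α) (H : SimpleGraph β) :
    SimpleGraph (α × β) where
  Adj x y := G.Adj x.1 y.1 ∧ H.Adj x.2 y.2
  symm := ⟨fun _ _ h => ⟨h.1.symm, h.2.symm⟩⟩
  loopless := ⟨fun x h => G.loopless.irrefl x.1 h.1⟩

/-- The star `K_{1,s}`. -/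
def starGraph (s : ℕ) : SimpleGraph (Fin 1 ⊕ Fin s) :=
  completeBipartiteGraph (Fin 1) (Fin s)

open scoped Classical in
/-- The vertex sum (weight) of `v` under an edge labeling `f`. -/
noncomputable def vertexSum {V : Type*} [Fintype V] (G : SimpleGraph V)
    (f : Sym2 V → ℕ) (v : V) : ℕ :=
  ∑ e ∈ G.edgeFinset, if v ∈ e then f e else 0

open scoped Classical in
/-- A graph is antimagic if some bijection from its edge set onto
`{1, …, |E|}` yields pairwise distinct vertex sums. -/
def IsAntimagic {V : Type*} [Fintype V] (G : SimpleGraph V) : Prop :=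
  ∃ f : Sym2 V → ℕ,
    Set.BijOn f G.edgeSet (Set.Icc 1 G.edgeFinset.card) ∧
    Function.Injective (vertexSum G f)


/-- The disjoint union of `m` copies of a graph `G`. -/
def mCopies {α : Type*} (m : ℕ) (G : SimpleGraph α) : SimpleGraph (Fin m × α) where
  Adj x y := x.1 = y.1 ∧ G.Adj x.2 y.2
  symm := ⟨fun _ _ h => ⟨h.1.symm, h.2.symm⟩⟩
  loopless := ⟨fun x h => G.loopless.irrefl x.2 h.2⟩

def ed (m : ℕ) (p : Fin m × Fin 2) : Sym2 (Fin m × Fin 3) :=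
  if p.2 = 0 then s((p.1, (0 : Fin 3)), (p.1, (1 : Fin 3)))
  else s((p.1, (1 : Fin 3)), (p.1, (2 : Fin 3)))

lemma ed_inj {m : ℕ} : Function.Injective (ed m) := by
  rintro ⟨i, u⟩ ⟨j, v⟩ h
  fin_cases u <;> fin_cases v <;>
    simp_all [ed, Sym2.eq_iff, Prod.ext_iff, Fin.ext_iff]

lemma ed_mem {m : ℕ} (p : Fin m × Fin 2) :
    ed m p ∈ (mCopies m (pathGraph 3)).edgeSet := by
  obtain ⟨l, k⟩ := p
  fin_cases k <;>
    exact ⟨rfl, pathGraph_adj.mpr (by simp)⟩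

lemma mem_ed {m : ℕ} (i : Fin m) (u : Fin 3) (p : Fin m × Fin 2) :
    (i, u) ∈ ed m p ↔ p.1 = i ∧ ((p.2 = 0 ∧ (u = 0 ∨ u = 1)) ∨ (p.2 = 1 ∧ (u = 1 ∨ u = 2))) := by
  obtain ⟨j, k⟩ := p
  fin_cases k <;> simp [ed, Sym2.mem_iff, Prod.ext_iff] <;> aesop

open scoped Classical in
lemma edgeFinset_eq {m : ℕ} :
    (mCopies m (pathGraph 3)).edgeFinset = Finset.image (ed m) Finset.univ := by
  ext e
  simp only [mem_edgeFinset, Finset.mem_image, Finset.mem_univ, true_and]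
  constructor
  · intro he
    induction e with
    | _ x y =>
      obtain ⟨i, u⟩ := x; obtain ⟨j, v⟩ := y
      rw [mem_edgeSet] at he
      obtain ⟨hij, hadj⟩ := he
      rcases hij
      rw [pathGraph_adj] at hadj
      have hadj' : (u : ℕ) + 1 = ↑v ∨ (v : ℕ) + 1 = ↑u := hadj
      have hc : (u = 0 ∧ v = 1) ∨ (u = 1 ∧ v = 2) ∨ (u = 1 ∧ v = 0) ∨ (u = 2 ∧ v = 1) := by
        have hu := u.isLt; have hv := v.isLt
        simp only [Fin.ext_iff, Fin.val_zero, Fin.val_one, Fin.val_two]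
        omega
      rcases hc with ⟨rfl, rfl⟩ | ⟨rfl, rfl⟩ | ⟨rfl, rfl⟩ | ⟨rfl, rfl⟩
      · exact ⟨(i, 0), by simp [ed]⟩
      · exact ⟨(i, 1), by simp [ed]⟩
      · exact ⟨(i, 0), by simp [ed, Sym2.eq_iff]⟩
      · exact ⟨(i, 1), by simp [ed, Sym2.eq_iff]⟩
  · rintro ⟨p, hp⟩
    exact hp ▸ ed_mem p
open scoped Classical in
lemma vsum_formula {m : ℕ} (f : Sym2 (Fin m × Fin 3) → ℕ) (v : Fin m × Fin 3) :
    vertexSum (mCopies m (pathGraph 3)) f v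
      = ∑ p : Fin m × Fin 2, if v ∈ ed m p then f (ed m p) else 0 := by
  rw [vertexSum, edgeFinset_eq,
    Finset.sum_image (fun p _ q _ h => ed_inj h)]
  exact Finset.sum_congr rfl fun p _ => by congr

open scoped Classical in
lemma vsum0 {m : ℕ} (f : Sym2 (Fin m × Fin 3) → ℕ) (i : Fin m) :
    vertexSum (mCopies m (pathGraph 3)) f (i, 0) = f (ed m (i, 0)) := by
  rw [vsum_formula, Finset.sum_eq_single (i, (0 : Fin 2))]
  · rw [if_pos]
    rw [mem_ed]
    exact ⟨rfl, Or.inl ⟨rfl, Or.inl rfl⟩⟩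
  · intro p _ hp
    rw [if_neg]
    rw [mem_ed]
    rintro ⟨h1, ⟨h2, h3 | h3⟩ | ⟨h2, h3 | h3⟩⟩
    · exact hp (Prod.ext h1 h2)
    · exact absurd h3 (by decide)
    · exact absurd h3 (by decide)
    · exact absurd h3 (by decide)
  · simp

open scoped Classical in
lemma vsum2 {m : ℕ} (f : Sym2 (Fin m × Fin 3) → ℕ) (i : Fin m) :
    vertexSum (mCopies m (pathGraph 3)) f (i, 2) = f (ed m (i, 1)) := by
  rw [vsum_formula, Finset.sum_eq_single (i, (1 : Fin 2))]
  · rw [if_pos]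
    rw [mem_ed]
    exact ⟨rfl, Or.inr ⟨rfl, Or.inr rfl⟩⟩
  · intro p _ hp
    rw [if_neg]
    rw [mem_ed]
    rintro ⟨h1, ⟨h2, h3 | h3⟩ | ⟨h2, h3 | h3⟩⟩
    · exact absurd h3 (by decide)
    · exact absurd h3 (by decide)
    · exact absurd h3 (by decide)
    · exact hp (Prod.ext h1 h2)
  · simp

open scoped Classical in
lemma vsum1 {m : ℕ} (f : Sym2 (Fin m × Fin 3) → ℕ) (i : Fin m) :
    vertexSum (mCopies m (pathGraph 3)) f (i, 1)
      = f (ed m (i, 0)) + f (ed m (i, 1)) := by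
  rw [vsum_formula,
    ← Finset.sum_subset (Finset.subset_univ ({(i, 0), (i, 1)} : Finset (Fin m × Fin 2)))]
  · rw [Finset.sum_pair (by simp : ((i, 0) : Fin m × Fin 2) ≠ (i, 1))]
    rw [if_pos, if_pos]
    · rw [mem_ed]; exact ⟨rfl, Or.inr ⟨rfl, Or.inl rfl⟩⟩
    · rw [mem_ed]; exact ⟨rfl, Or.inl ⟨rfl, Or.inr rfl⟩⟩
  · intro p _ hp
    rw [if_neg]
    rw [mem_ed]
    rintro ⟨h1, ⟨h2, _⟩ | ⟨h2, _⟩⟩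
    · exact hp (by simp [Prod.ext_iff, h1, h2])
    · exact hp (by simp [Prod.ext_iff, h1, h2])

lemma gauss (n : ℕ) : (∑ x ∈ Finset.Icc 1 n, x) * 2 = n * (n + 1) := by
  induction n with
  | zero => simp
  | succ k ih =>
    rw [Finset.sum_Icc_succ_top (by omega), Nat.add_mul, ih]
    ring

/-- For every `m ≥ 2`, the disjoint union of `m` copies of `P_3` is not antimagic. -/
theorem mP3_not_antimagic (m : ℕ) (hm : 2 ≤ m) :
    ¬ IsAntimagic (mCopies m (pathGraph 3)) := by
  classical
  rintro ⟨f, hbij, hinj⟩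
  set G := mCopies m (pathGraph 3) with hG
  set N := G.edgeFinset.card with hN
  have hcard : N = 2 * m := by
    rw [hN, hG, edgeFinset_eq, Finset.card_image_of_injective _ ed_inj,
      Finset.card_univ, Fintype.card_prod, Fintype.card_fin, Fintype.card_fin]
    ring
  set a : Fin m → ℕ := fun i => f (ed m (i, 0)) with ha
  set b : Fin m → ℕ := fun i => f (ed m (i, 1)) with hb
  have hlab : ∀ p : Fin m × Fin 2, f (ed m p) ∈ Set.Icc 1 N :=
    fun p => hbij.mapsTo (ed_mem p)
  -- each center sum exceeds N
  have hcen : ∀ i : Fin m, N + 1 ≤ a i + b i := by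
    intro i
    by_contra hcon
    push_neg at hcon
    have h1 : 1 ≤ a i := (hlab (i, 0)).1
    have hmem : a i + b i ∈ Set.Icc 1 N := ⟨by omega, by omega⟩
    obtain ⟨e, he, hfe⟩ := hbij.surjOn hmem
    have he' : e ∈ G.edgeFinset := mem_edgeFinset.2 he
    rw [hG, edgeFinset_eq, Finset.mem_image] at he'
    obtain ⟨⟨j, k⟩, -, rfl⟩ := he'
    have hk : k = 0 ∨ k = 1 := by
      have h2 := k.isLt
      have hv : k.val = 0 ∨ k.val = 1 := by omega
      rcases hv with h | h
      · exact Or.inl (by simp [Fin.ext_iff, h])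
      · exact Or.inr (by simp [Fin.ext_iff, h])
    rcases hk with rfl | rfl
    · have heq : vertexSum G f (j, 0) = vertexSum G f (i, 1) := by
        rw [hG, vsum0, vsum1]; exact hfe
      have := hinj heq
      simp [Prod.ext_iff] at this
    · have heq : vertexSum G f (j, 2) = vertexSum G f (i, 1) := by
        rw [hG, vsum2, vsum1]; exact hfe
      have := hinj heq
      simp [Prod.ext_iff] at this
  -- total sum of labels
  have hsum : ∑ i : Fin m, (a i + b i) = ∑ x ∈ Finset.Icc 1 N, x := by
    have h1 : ∑ i : Fin m, (a i + b i) = ∑ p : Fin m × Fin 2, f (ed m p) := by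
      rw [Fintype.sum_prod_type]
      refine Finset.sum_congr rfl fun i _ => ?_
      rw [Fin.sum_univ_two]
    have h2 : ∑ p : Fin m × Fin 2, f (ed m p) = ∑ e ∈ G.edgeFinset, f e := by
      rw [hG, edgeFinset_eq, Finset.sum_image (fun p _ q _ h => ed_inj h)]
    have h3 : ∑ e ∈ G.edgeFinset, f e = ∑ x ∈ Finset.Icc 1 N, x := by
      refine Finset.sum_bij (fun e _ => f e) ?_ ?_ ?_ ?_
      · intro e he
        rw [Finset.mem_Icc]
        exact Set.mem_Icc.mp (hbij.mapsTo (mem_edgeFinset.mp he))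
      · intro e₁ h₁ e₂ h₂ h
        exact hbij.injOn (mem_edgeFinset.mp h₁) (mem_edgeFinset.mp h₂) h
      · intro x hx
        obtain ⟨e, he, hfe⟩ := hbij.surjOn (Set.mem_Icc.mpr (Finset.mem_Icc.mp hx))
        exact ⟨e, mem_edgeFinset.2 he, hfe⟩
      · intro e _; rfl
    rw [h1, h2, h3]
  -- distinctness of two center sums
  have hne : a ⟨0, by omega⟩ + b ⟨0, by omega⟩ ≠ a ⟨1, by omega⟩ + b ⟨1, by omega⟩ := by
    intro h
    have heq : vertexSum G f (⟨0, by omega⟩, 1) = vertexSum G f (⟨1, by omega⟩, 1) := by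
      rw [hG, vsum1, vsum1]; exact h
    have := hinj heq
    simp [Prod.ext_iff, Fin.ext_iff] at this
  -- strict inequality
  have hstrict : ∑ i : Fin m, (N + 1) < ∑ i : Fin m, (a i + b i) := by
    refine Finset.sum_lt_sum (fun i _ => hcen i) ?_
    by_cases h0 : a ⟨0, by omega⟩ + b ⟨0, by omega⟩ = N + 1
    · refine ⟨⟨1, by omega⟩, Finset.mem_univ _, ?_⟩
      have := hcen ⟨1, by omega⟩
      omega
    · refine ⟨⟨0, by omega⟩, Finset.mem_univ _, ?_⟩
      have := hcen ⟨0, by omega⟩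
      omega
  have hconst : ∑ _i : Fin m, (N + 1) = m * (N + 1) := by
    rw [Finset.sum_const, Finset.card_univ, Fintype.card_fin, smul_eq_mul]
  have hg := gauss N
  rw [hsum] at hstrict
  rw [hconst] at hstrict
  -- hstrict : m * (N+1) < ∑ Icc 1 N, and (∑ Icc 1 N)*2 = N*(N+1), N = 2m
  have : (m * (N + 1)) * 2 < N * (N + 1) := by
    calc (m * (N + 1)) * 2 < (∑ x ∈ Finset.Icc 1 N, x) * 2 := by omega
    _ = N * (N + 1) := hg
  rw [hcard] at this
  nlinarith
end

section
/- For every s ≥ 3, the disjoint union of two copies of the star K_{1,s} is antimagic. -/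
open SimpleGraph

namespace TwoStars

abbrev VV (s : ℕ) : Type := (Fin 1 ⊕ Fin s) ⊕ (Fin 1 ⊕ Fin s)

def hfun (s : ℕ) : VV s → ℕ
  | .inl (.inr i) => if i.val = s - 1 then s + 1 else i.val + 1
  | .inr (.inr i) => if i.val = 0 then s else s + 1 + i.val
  | _ => 0

def flab (s : ℕ) : Sym2 (VV s) → ℕ :=
  Sym2.lift ⟨fun x y => hfun s x + hfun s y, fun _ _ => Nat.add_comm _ _⟩

def Efun (s : ℕ) : Bool × Fin s → Sym2 (VV s)
  | (false, i) => s(Sum.inl (Sum.inl 0), Sum.inl (Sum.inr i))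
  | (true, i) => s(Sum.inr (Sum.inl 0), Sum.inr (Sum.inr i))

lemma Efun_inj (s : ℕ) : Function.Injective (Efun s) := by
  rintro ⟨b, i⟩ ⟨c, j⟩ h
  cases b <;> cases c <;>
    simp [Efun, Sym2.eq, Sym2.rel_iff', Prod.ext_iff] at h ⊢ <;>
    tauto

lemma edgeSet_eq (s : ℕ) :
    (_root_.starGraph s ⊕g _root_.starGraph s).edgeSet = Set.range (Efun s) := by
  ext e
  induction e using Sym2.inductionOn with
  | hf x y =>
    simp only [mem_edgeSet, Set.mem_range]
    constructor
    · intro h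
      rcases x with (x | x) <;> rcases y with (y | y) <;>
        rcases x with (x | x) <;> rcases y with (y | y) <;>
        simp_all [_root_.starGraph, SimpleGraph.sum]
      · exact Or.inl ⟨y, by simp [Efun, Fin.fin_one_eq_zero x]⟩
      · exact Or.inl ⟨x, by simp [Efun, Fin.fin_one_eq_zero y, Sym2.eq_swap]⟩
      · exact Or.inr ⟨y, by simp [Efun, Fin.fin_one_eq_zero x]⟩
      · exact Or.inr ⟨x, by simp [Efun, Fin.fin_one_eq_zero y, Sym2.eq_swap]⟩
    · rintro ⟨⟨b, i⟩, h⟩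
      rw [← SimpleGraph.mem_edgeSet, ← h]
      cases b <;> simp [Efun, _root_.starGraph, SimpleGraph.sum]

lemma edgeFinset_eq (s : ℕ) [Fintype ((_root_.starGraph s ⊕g _root_.starGraph s).edgeSet)] :
    (_root_.starGraph s ⊕g _root_.starGraph s).edgeFinset = Finset.image (Efun s) Finset.univ := by
  apply Finset.coe_injective
  rw [SimpleGraph.coe_edgeFinset, Finset.coe_image, Finset.coe_univ, Set.image_univ,
    edgeSet_eq]

lemma card_eq (s : ℕ) [Fintype ((_root_.starGraph s ⊕g _root_.starGraph s).edgeSet)] :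
    (_root_.starGraph s ⊕g _root_.starGraph s).edgeFinset.card = 2 * s := by
  rw [edgeFinset_eq, Finset.card_image_of_injective _ (Efun_inj s)]
  simp [two_mul]

lemma vertexSum_eq (s : ℕ) (v : VV s) :
    vertexSum (_root_.starGraph s ⊕g _root_.starGraph s) (flab s) v
      = ∑ p : Bool × Fin s, if v ∈ Efun s p then flab s (Efun s p) else 0 := by
  unfold vertexSum
  rw [edgeFinset_eq, Finset.sum_image (fun a _ b _ h => Efun_inj s h)]
  exact Finset.sum_congr rfl fun p _ => by split_ifs with h1 <;> simp_all

lemma flab_Efun_false (s : ℕ) (i : Fin s) :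
    flab s (Efun s (false, i)) = hfun s (.inl (.inr i)) := by
  simp [flab, Efun, hfun]

lemma flab_Efun_true (s : ℕ) (i : Fin s) :
    flab s (Efun s (true, i)) = hfun s (.inr (.inr i)) := by
  simp [flab, Efun, hfun]

lemma vs_left_leaf (s : ℕ) (i : Fin s) :
    vertexSum (_root_.starGraph s ⊕g _root_.starGraph s) (flab s) (.inl (.inr i))
      = hfun s (.inl (.inr i)) := by
  rw [vertexSum_eq, Finset.sum_eq_single (false, i)]
  · rw [if_pos (by simp [Efun]), flab_Efun_false]
  · rintro ⟨b, k⟩ - hne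
    cases b <;> simp_all [Efun, Prod.ext_iff]
    exact fun h => (hne h.symm).elim
  · simp

lemma vs_right_leaf (s : ℕ) (i : Fin s) :
    vertexSum (_root_.starGraph s ⊕g _root_.starGraph s) (flab s) (.inr (.inr i))
      = hfun s (.inr (.inr i)) := by
  rw [vertexSum_eq, Finset.sum_eq_single (true, i)]
  · rw [if_pos (by simp [Efun]), flab_Efun_true]
  · rintro ⟨b, k⟩ - hne
    cases b <;> simp_all [Efun, Prod.ext_iff]
    exact fun h => (hne h.symm).elim
  · simp

def Lsum (s : ℕ) : ℕ := ∑ k : Fin s, hfun s (.inl (.inr k))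
def Rsum (s : ℕ) : ℕ := ∑ k : Fin s, hfun s (.inr (.inr k))

lemma vs_left_center (s : ℕ) (a : Fin 1) :
    vertexSum (_root_.starGraph s ⊕g _root_.starGraph s) (flab s) (.inl (.inl a))
      = Lsum s := by
  rw [vertexSum_eq, Fintype.sum_prod_type, Fintype.sum_bool]
  have h1 : ∀ k : Fin s, (.inl (.inl a) : VV s) ∉ Efun s (true, k) := by
    intro k; simp [Efun]
  have h2 : ∀ k : Fin s, (.inl (.inl a) : VV s) ∈ Efun s (false, k) := by
    intro k; simp [Efun, Fin.fin_one_eq_zero a]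
  simp only [if_neg (h1 _), if_pos (h2 _), Finset.sum_const_zero, zero_add]
  exact Finset.sum_congr rfl fun k _ => flab_Efun_false s k

lemma vs_right_center (s : ℕ) (a : Fin 1) :
    vertexSum (_root_.starGraph s ⊕g _root_.starGraph s) (flab s) (.inr (.inl a))
      = Rsum s := by
  rw [vertexSum_eq, Fintype.sum_prod_type, Fintype.sum_bool]
  have h1 : ∀ k : Fin s, (.inr (.inl a) : VV s) ∉ Efun s (false, k) := by
    intro k; simp [Efun]
  have h2 : ∀ k : Fin s, (.inr (.inl a) : VV s) ∈ Efun s (true, k) := by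
    intro k; simp [Efun, Fin.fin_one_eq_zero a]
  simp only [if_neg (h1 _), if_pos (h2 _), Finset.sum_const_zero, add_zero]
  exact Finset.sum_congr rfl fun k _ => flab_Efun_true s k

lemma sums_eq (s : ℕ) (hs : 3 ≤ s) :
    ∃ A, 2 * A = s * (s - 1) ∧ Lsum s = A + s + 1 ∧ Rsum s + 1 = s * s + A + s := by
  refine ⟨∑ n ∈ Finset.range s, n, ?_, ?_, ?_⟩
  · have := Finset.sum_range_id_mul_two s
    omega
  · have h1 : Lsum s = ∑ n ∈ Finset.range s,
        (if n = s - 1 then s + 1 else n + 1) := by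
      rw [Lsum, ← Fin.sum_univ_eq_sum_range (fun n => if n = s - 1 then s + 1 else n + 1) s]
      rfl
    have h2 : ∀ n ∈ Finset.range s, (if n = s - 1 then s + 1 else n + 1)
        = (n + 1) + (if n = s - 1 then 1 else 0) := by
      intro n hn
      simp only [Finset.mem_range] at hn
      split_ifs <;> omega
    rw [h1, Finset.sum_congr rfl h2, Finset.sum_add_distrib, Finset.sum_add_distrib,
      Finset.sum_ite_eq' (Finset.range s) (s - 1) (fun _ => 1)]
    simp only [Finset.sum_const, Finset.card_range, smul_eq_mul, mul_one]
    rw [if_pos (by simp only [Finset.mem_range]; omega)]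
  · have h1 : Rsum s = ∑ n ∈ Finset.range s,
        (if n = 0 then s else s + 1 + n) := by
      rw [Rsum, ← Fin.sum_univ_eq_sum_range (fun n => if n = 0 then s else s + 1 + n) s]
      rfl
    have h2 : (∑ n ∈ Finset.range s, (if n = 0 then s else s + 1 + n))
        + (∑ n ∈ Finset.range s, (if n = 0 then 1 else 0))
        = ∑ n ∈ Finset.range s, (s + n + 1) := by
      rw [← Finset.sum_add_distrib]
      refine Finset.sum_congr rfl fun n _ => ?_
      split_ifs <;> omega
    have h3 : (∑ n ∈ Finset.range s, (if n = 0 then (1:ℕ) else 0)) = 1 := by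
      rw [Finset.sum_ite_eq' (Finset.range s) 0 (fun _ => 1),
        if_pos (by simp only [Finset.mem_range]; omega)]
    have h4 : (∑ n ∈ Finset.range s, (s + n + 1))
        = s * s + (∑ n ∈ Finset.range s, n) + s := by
      rw [Finset.sum_add_distrib, Finset.sum_add_distrib]
      simp only [Finset.sum_const, Finset.card_range, smul_eq_mul, mul_one]
    omega

lemma hfun_left_leaf_bounds (s : ℕ) (hs : 3 ≤ s) (i : Fin s) :
    1 ≤ hfun s (.inl (.inr i)) ∧ hfun s (.inl (.inr i)) ≤ s + 1 := by
  have := i.isLt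
  simp only [hfun]; split_ifs <;> omega

lemma hfun_right_leaf_bounds (s : ℕ) (hs : 3 ≤ s) (i : Fin s) :
    s ≤ hfun s (.inr (.inr i)) ∧ hfun s (.inr (.inr i)) ≤ 2 * s := by
  have := i.isLt
  simp only [hfun]; split_ifs <;> omega

lemma key_facts (s : ℕ) (hs : 3 ≤ s) :
    2 * s + 1 ≤ Lsum s ∧ Lsum s + 7 ≤ Rsum s := by
  obtain ⟨A, hA, hL, hR⟩ := sums_eq s hs
  have h9 : 3 * 3 ≤ s * s := Nat.mul_le_mul hs hs
  have hAs : s * 2 ≤ s * (s - 1) := Nat.mul_le_mul_left s (by omega)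
  omega

lemma vsum_inj (s : ℕ) (hs : 3 ≤ s) :
    Function.Injective (vertexSum (_root_.starGraph s ⊕g _root_.starGraph s) (flab s)) := by
  have key := key_facts s hs
  intro u v h
  rcases u with (u | u) <;> rcases v with (v | v) <;>
    rcases u with (u | u) <;> rcases v with (v | v) <;>
    simp only [vs_left_center, vs_right_center, vs_left_leaf, vs_right_leaf] at h
  · rw [Subsingleton.elim u v]
  · exfalso; have := hfun_left_leaf_bounds s hs v; omega
  · exfalso; have := hfun_left_leaf_bounds s hs u; omega
  · have hu := u.isLt; have hv := v.isLt
    simp only [hfun] at h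
    have : u = v := Fin.ext (by split_ifs at h <;> omega)
    rw [this]
  · exfalso; omega
  · exfalso; have := hfun_right_leaf_bounds s hs v; omega
  · exfalso; have := hfun_right_leaf_bounds s hs u
    have h2 := hfun_left_leaf_bounds s hs u; omega
  · exfalso; have hu := u.isLt; have hv := v.isLt
    simp only [hfun] at h; split_ifs at h <;> omega
  · exfalso; omega
  · exfalso; have := hfun_left_leaf_bounds s hs v; omega
  · exfalso; have := hfun_right_leaf_bounds s hs u; omega
  · exfalso; have hu := u.isLt; have hv := v.isLt
    simp only [hfun] at h; split_ifs at h <;> omega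
  · rw [Subsingleton.elim u v]
  · exfalso; have := hfun_right_leaf_bounds s hs v; omega
  · exfalso; have := hfun_right_leaf_bounds s hs u; omega
  · have hu := u.isLt; have hv := v.isLt
    simp only [hfun] at h
    have : u = v := Fin.ext (by split_ifs at h <;> omega)
    rw [this]

lemma flab_Efun_bounds (s : ℕ) (hs : 3 ≤ s) (p : Bool × Fin s) :
    flab s (Efun s p) ∈ Set.Icc 1 (2 * s) := by
  obtain ⟨b, i⟩ := p
  cases b
  · rw [flab_Efun_false]
    have := hfun_left_leaf_bounds s hs i
    simp only [Set.mem_Icc]; omega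
  · rw [flab_Efun_true]
    have := hfun_right_leaf_bounds s hs i
    simp only [Set.mem_Icc]; omega

lemma labels_inj (s : ℕ) (hs : 3 ≤ s) (p q : Bool × Fin s)
    (h : flab s (Efun s p) = flab s (Efun s q)) : p = q := by
  obtain ⟨b, i⟩ := p; obtain ⟨c, j⟩ := q
  have hi := i.isLt; have hj := j.isLt
  cases b <;> cases c <;>
    simp only [flab_Efun_false, flab_Efun_true, hfun] at h
  · have : i = j := Fin.ext (by split_ifs at h <;> omega)
    rw [this]
  · exfalso; split_ifs at h <;> omega
  · exfalso; split_ifs at h <;> omega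
  · have : i = j := Fin.ext (by split_ifs at h <;> omega)
    rw [this]

end TwoStars

/-- For every `s ≥ 3`, the disjoint union of two copies of the star `K_{1,s}`
is antimagic. -/
theorem two_stars_antimagic (s : ℕ) (hs : 3 ≤ s) :
    IsAntimagic (_root_.starGraph s ⊕g _root_.starGraph s) := by
  classical
  refine ⟨TwoStars.flab s, ⟨?_, ?_, ?_⟩, TwoStars.vsum_inj s hs⟩
  · intro e he
    rw [TwoStars.edgeSet_eq] at he
    obtain ⟨p, rfl⟩ := he
    rw [TwoStars.card_eq]
    exact TwoStars.flab_Efun_bounds s hs p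
  · intro e he e' he' hfe
    rw [TwoStars.edgeSet_eq] at he he'
    obtain ⟨p, rfl⟩ := he; obtain ⟨q, rfl⟩ := he'
    rw [TwoStars.labels_inj s hs p q hfe]
  · intro n hn
    rw [TwoStars.card_eq] at hn
    have hT : Finset.image (TwoStars.flab s) (_root_.starGraph s ⊕g _root_.starGraph s).edgeFinset
        = Finset.Icc 1 (2 * s) := by
      apply Finset.eq_of_subset_of_card_le
      · intro m hm
        simp only [Finset.mem_image] at hm
        obtain ⟨e, he, rfl⟩ := hm
        rw [SimpleGraph.mem_edgeFinset, TwoStars.edgeSet_eq] at he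
        obtain ⟨p, rfl⟩ := he
        have := TwoStars.flab_Efun_bounds s hs p
        simpa [Finset.mem_Icc, Set.mem_Icc] using this
      · have hcard : (Finset.image (TwoStars.flab s)
            (_root_.starGraph s ⊕g _root_.starGraph s).edgeFinset).card
            = (_root_.starGraph s ⊕g _root_.starGraph s).edgeFinset.card := by
          apply Finset.card_image_of_injOn
          intro e he e' he' hfe
          simp only [Finset.mem_coe, SimpleGraph.mem_edgeFinset,
            TwoStars.edgeSet_eq, Set.mem_range] at he he'
          obtain ⟨p, rfl⟩ := he; obtain ⟨q, rfl⟩ := he'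
          rw [TwoStars.labels_inj s hs p q hfe]
        rw [Nat.card_Icc, hcard, TwoStars.card_eq]
        omega
    have hmem : n ∈ Finset.Icc 1 (2 * s) := by
      simpa [Finset.mem_Icc, Set.mem_Icc] using hn
    rw [← hT, Finset.mem_image] at hmem
    obtain ⟨e, he, hfe⟩ := hmem
    exact ⟨e, by rwa [← SimpleGraph.mem_edgeFinset], hfe⟩
end

section
/- For every s ≥ 3 and m ≥ 1, the direct product K_{1,s} × P_{2m+2} is antimagic. -/
open SimpleGraph

namespace APX

/-- triangular number: 1 + 2 + ... + s -/
def TT (s : ℕ) : ℕ := ∑ i ∈ Finset.range s, (i + 1)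

def V4 (s m : ℕ) : ℕ := 2*(s*s*m) + 4*(s*s) + TT s + s*(m % 2)

def e0 (s m : ℕ) : ℕ := (TT s + s*m) % 2

def Bad (s v : ℕ) : Prop := v % (4*(s*s)) = 0 ∨ v % (4*(s*s)) = 2*s

instance (s v : ℕ) : Decidable (Bad s v) := by unfold Bad; infer_instance

def ee (s m : ℕ) : ℕ := if Bad s (V4 s m - e0 s m) then e0 s m + 2 else e0 s m

def oo (m b : ℕ) : ℕ := if b < m then (b + m) % 2 else b % 2

def blk (m p : ℕ) : ℕ := if p % 2 = 1 then m - 1 - p/2 else m + p/2 - 1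

def Lo (s m b i1 : ℕ) : ℕ := 2*s + 2*s*b + 2*i1 - 1 + oo m b
def Ro (s m b i1 : ℕ) : ℕ := 2*s + 2*s*b + 2*i1 - oo m b
def aL (s m i1 : ℕ) : ℕ := if i1 < s then i1 else s + ee s m
def bL (s m i1 : ℕ) : ℕ := if i1 ≤ ee s m then s + i1 - 1 else s + i1
def Lc (s m i1 k : ℕ) : ℕ := if k = 2*m then aL s m i1 else Lo s m (blk m (k+1)) i1
def Ll (s m i1 k : ℕ) : ℕ := if k = 0 then bL s m i1 else Ro s m (blk m k) i1

lemma TT_succ (n : ℕ) : TT (n+1) = TT n + (n+1) := Finset.sum_range_succ _ _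

lemma two_TT (s : ℕ) : 2 * TT s = s*s + s := by
  induction s with
  | zero => rfl
  | succ n ih => rw [TT_succ]; nlinarith [ih]

lemma oo_le (m b : ℕ) : oo m b ≤ 1 := by unfold oo; split <;> omega

lemma e0_le (s m : ℕ) : e0 s m ≤ 1 := Nat.le_of_lt_succ (Nat.mod_lt _ (by norm_num))

lemma ee_le (s m : ℕ) : ee s m ≤ 3 := by
  unfold ee; split <;> have := e0_le s m <;> omega

lemma ee_parity (s m : ℕ) : ee s m % 2 = (TT s + s*m) % 2 := by
  have h : e0 s m = (TT s + s*m) % 2 := rfl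
  unfold ee; split <;> omega

lemma sq_ge (s : ℕ) (hs : 3 ≤ s) : 3*s ≤ s*s := Nat.mul_le_mul_right s hs

lemma TT_ge (s : ℕ) (hs : 3 ≤ s) : 2*s ≤ TT s := by
  have h1 := two_TT s; have h2 := sq_ge s hs; omega

lemma TT_le (s : ℕ) : 2 * TT s ≤ 2*(s*s) := by
  have h1 := two_TT s; nlinarith

lemma ee_le_V4 (s m : ℕ) (hs : 3 ≤ s) : ee s m + 2 ≤ V4 s m := by
  have h1 := ee_le s m; have h2 := sq_ge s hs; unfold V4; omega

/-- key property of the choice of `ee`. -/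
lemma notBad (s m : ℕ) (hs : 3 ≤ s) : ¬ Bad s (V4 s m - ee s m) := by
  have hsq := sq_ge s hs
  have h0 := e0_le s m
  have hV : 4*(s*s) ≤ V4 s m := by unfold V4; omega
  unfold ee
  split
  · rename_i h
    -- chosen e0+2; V4 - (e0+2) = W - 2 where W = V4 - e0 is Bad
    have hW2 : 2+2 ≤ V4 s m - e0 s m := by omega
    intro hbad
    have hdm := Nat.div_add_mod (V4 s m - e0 s m) (4*(s*s))
    generalize hq : (V4 s m - e0 s m) / (4*(s*s)) = q at hdm
    rcases h with h | h
    · -- W % M4 = 0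
      rw [h] at hdm
      rcases q with _ | k
      · simp at hdm; omega
      · have hmul : 4*(s*s)*(k+1) = 4*(s*s)*k + 4*(s*s) := by ring
        have hW' : V4 s m - (e0 s m + 2) = 4*(s*s)*k + (4*(s*s) - 2) := by omega
        rcases hbad with hb | hb <;>
        · rw [hW'] at hb
          rw [Nat.mul_add_mod] at hb
          rw [Nat.mod_eq_of_lt (by omega)] at hb
          omega
    · -- W % M4 = 2s
      rw [h] at hdm
      have hW' : V4 s m - (e0 s m + 2) = 4*(s*s)*q + (2*s - 2) := by omega
      rcases hbad with hb | hb <;>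
      · rw [hW'] at hb
        rw [Nat.mul_add_mod] at hb
        rw [Nat.mod_eq_of_lt (by omega)] at hb
        omega
  · rename_i h; exact h

end APX

namespace APX

/-- sums of target values -/
def LcS (s m k : ℕ) : ℕ :=
  if k = 2*m then TT s + ee s m
  else 2*(s*s*(blk m (k+1)+1)) + s*s + s * oo m (blk m (k+1))

def LlS (s m k : ℕ) : ℕ :=
  if k = 0 then s*s + TT s - ee s m
  else 2*(s*s*(blk m k+1)) + s*s + (s - s * oo m (blk m k))

lemma sum_odd (s : ℕ) : ∑ i ∈ Finset.range s, (2*i+1) = s*s := by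
  induction s with
  | zero => rfl
  | succ n ih => rw [Finset.sum_range_succ, ih]; ring

lemma sum_Lo (s m b : ℕ) :
    ∑ i ∈ Finset.range s, Lo s m b (i+1) = 2*(s*s*(b+1)) + s*s + s * oo m b := by
  have hpt : ∀ i, Lo s m b (i+1) = (2*s + 2*s*b + oo m b) + (2*i+1) := by
    intro i; unfold Lo; omega
  rw [Finset.sum_congr rfl (fun i _ => hpt i), Finset.sum_add_distrib,
    Finset.sum_const, Finset.card_range, sum_odd, smul_eq_mul]
  ring

lemma sum_Ro (s m b : ℕ) :
    ∑ i ∈ Finset.range s, Ro s m b (i+1)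
      = 2*(s*s*(b+1)) + s*s + (s - s * oo m b) := by
  have ho := oo_le m b
  have hpt : ∀ i, Ro s m b (i+1) + oo m b = (2*s + 2*s*b) + (2*i+2) := by
    intro i; unfold Ro; omega
  have h2 : (∑ i ∈ Finset.range s, Ro s m b (i+1)) + s * oo m b
      = s*(2*s+2*s*b) + (s*s + s) := by
    have := Finset.sum_congr rfl (fun i (_ : i ∈ Finset.range s) => hpt i)
    rw [Finset.sum_add_distrib, Finset.sum_const, Finset.card_range, smul_eq_mul] at this
    rw [this, Finset.sum_add_distrib, Finset.sum_const, Finset.card_range, smul_eq_mul]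
    have : ∑ i ∈ Finset.range s, (2*i+2) = (s*s) + s := by
      have h3 : ∀ i, 2*i+2 = (2*i+1) + 1 := fun i => by omega
      rw [Finset.sum_congr rfl (fun i _ => h3 i), Finset.sum_add_distrib, sum_odd]
      simp
    rw [this]
  have hso : s * oo m b ≤ s * 1 := Nat.mul_le_mul_left s ho
  have hring2 : s*(2*s+2*s*b) + (s*s+s) = 2*(s*s*(b+1)) + s*s + s := by ring
  omega

lemma sum_aL (s m : ℕ) (hs : 3 ≤ s) :
    ∑ i ∈ Finset.range s, aL s m (i+1) = TT s + ee s m := by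
  obtain ⟨t, rfl⟩ : ∃ t, s = t+1 := ⟨s-1, by omega⟩
  rw [Finset.sum_range_succ]
  have h1 : ∀ i ∈ Finset.range t, aL (t+1) m (i+1) = i+1 := by
    intro i hi; simp only [Finset.mem_range] at hi
    unfold aL; rw [if_pos (by omega)]
  rw [Finset.sum_congr rfl h1]
  have h2 : aL (t+1) m (t+1) = (t+1) + ee (t+1) m := by
    unfold aL; rw [if_neg (by omega)]
  rw [h2]
  have : TT (t+1) = TT t + (t+1) := TT_succ t
  have h3 : ∑ i ∈ Finset.range t, (i+1) = TT t := rfl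
  omega

lemma sum_bL (s m : ℕ) (hs : 3 ≤ s) :
    ∑ i ∈ Finset.range s, bL s m (i+1) = s*s + TT s - ee s m := by
  have he : ee s m ≤ 3 := ee_le s m
  have hpt : ∀ i, bL s m (i+1) + (if i+1 ≤ ee s m then 1 else 0) = s+(i+1) := by
    intro i; unfold bL; split_ifs with h <;> omega
  have hsum := Finset.sum_congr rfl (fun i (_ : i ∈ Finset.range s) => hpt i)
  rw [Finset.sum_add_distrib] at hsum
  have hfil : ∑ i ∈ Finset.range s, (if i+1 ≤ ee s m then 1 else 0) = ee s m := by
    rw [Finset.sum_boole]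
    have : Finset.filter (fun i => i+1 ≤ ee s m) (Finset.range s) = Finset.range (ee s m) := by
      ext a; simp only [Finset.mem_filter, Finset.mem_range]; omega
    simp only [this]; simp
  have hrhs : ∑ i ∈ Finset.range s, (s+(i+1)) = s*s + TT s := by
    rw [Finset.sum_add_distrib, Finset.sum_const, Finset.card_range, smul_eq_mul]
    have h3 : ∑ i ∈ Finset.range s, (i+1) = TT s := rfl
    omega
  omega

lemma LcS_eq (s m k : ℕ) (hs : 3 ≤ s) :
    ∑ i ∈ Finset.range s, Lc s m (i+1) k = LcS s m k := by
  unfold Lc LcS; split_ifs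
  · exact sum_aL s m hs
  · exact sum_Lo s m _

lemma LlS_eq (s m k : ℕ) (hs : 3 ≤ s) :
    ∑ i ∈ Finset.range s, Ll s m (i+1) k = LlS s m k := by
  unfold Ll LlS; split_ifs
  · exact sum_bL s m hs
  · exact sum_Ro s m _

end APX

namespace APX

abbrev Vt (s m : ℕ) := (Fin 1 ⊕ Fin s) × Fin (2*m+2)

def GG (s m : ℕ) : SimpleGraph (Vt s m) := tensorProd (starGraph s) (pathGraph (2*m+2))

def F0 (s m i1 jc jl : ℕ) : ℕ :=
  if jl = jc + 1 then Lc s m i1 jc else if jc = jl + 1 then Ll s m i1 jl else 0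

def F (s m : ℕ) : Vt s m → Vt s m → ℕ
  | (Sum.inl _, j), (Sum.inr i, j') => F0 s m (i.1+1) j.1 j'.1
  | (Sum.inr i, j), (Sum.inl _, j') => F0 s m (i.1+1) j'.1 j.1
  | _, _ => 0

lemma F_comm (s m : ℕ) (u v : Vt s m) : F s m u v = F s m v u := by
  rcases u with ⟨x | x, j⟩ <;> rcases v with ⟨y | y, j'⟩ <;> rfl

noncomputable def fl (s m : ℕ) : Sym2 (Vt s m) → ℕ := Sym2.lift ⟨F s m, F_comm s m⟩

lemma fl_mk (s m : ℕ) (u v : Vt s m) : fl s m s(u, v) = F s m u v := rfl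

lemma GG_adj (s m : ℕ) (u v : Vt s m) :
    (GG s m).Adj u v ↔
      ((u.1.isLeft ∧ v.1.isRight ∨ u.1.isRight ∧ v.1.isLeft) ∧
        (u.2.1 + 1 = v.2.1 ∨ v.2.1 + 1 = u.2.1)) := by
  rcases u with ⟨x, j⟩; rcases v with ⟨y, j'⟩
  show (completeBipartiteGraph (Fin 1) (Fin s)).Adj x y ∧ (pathGraph (2*m+2)).Adj j j' ↔ _
  rw [pathGraph_adj]
  simp [completeBipartiteGraph]

lemma F_nonadj (s m : ℕ) (u v : Vt s m) (h : ¬ (GG s m).Adj u v) : F s m u v = 0 := by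
  rw [GG_adj] at h
  rcases u with ⟨x | x, j⟩ <;> rcases v with ⟨y | y, j'⟩ <;> simp_all [F, F0] <;>
    (rw [if_neg (by omega), if_neg (by omega)])

end APX

namespace APX

open Finset

open scoped Classical in
lemma vertexSum_eq_sum_univ {V : Type*} [Fintype V] (G : SimpleGraph V)
    (F : V → V → ℕ) (hF : ∀ a b, F a b = F b a) (v : V)
    (h0 : ∀ w, ¬ G.Adj v w → F v w = 0) :
    vertexSum G (Sym2.lift ⟨F, hF⟩) v = ∑ w ∈ Finset.univ, F v w := by
  classical
  unfold vertexSum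
  rw [← Finset.sum_filter]
  have h1 : G.edgeFinset.filter (fun e => v ∈ e)
      = (G.neighborFinset v).image (fun w => s(v, w)) := by
    ext e
    simp only [Finset.mem_filter, mem_edgeFinset, Finset.mem_image, mem_neighborFinset]
    constructor
    · rintro ⟨he, hv⟩
      exact ⟨Sym2.Mem.other hv, by rwa [← Sym2.other_spec hv, mem_edgeSet] at he,
        Sym2.other_spec hv⟩
    · rintro ⟨w, hadj, rfl⟩
      exact ⟨mem_edgeSet G |>.2 hadj, Sym2.mem_mk_left v w⟩
  rw [h1, Finset.sum_image (by intro a _ b _ h; exact Sym2.congr_right.mp h)]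
  have h2 : ∀ w ∈ G.neighborFinset v, Sym2.lift ⟨F, hF⟩ s(v, w) = F v w := fun w _ => rfl
  rw [Finset.sum_congr rfl h2]
  refine Finset.sum_subset (Finset.subset_univ _) ?_
  intro w _ hw
  exact h0 w (by rwa [mem_neighborFinset] at hw)

end APX

namespace APX

open Finset

def CW (s m j : ℕ) : ℕ :=
  (if j ≤ 2*m then LcS s m j else 0) + (if 1 ≤ j then LlS s m (j-1) else 0)

def LW (s m i1 j : ℕ) : ℕ :=
  if j = 0 then bL s m i1
  else if j = 2*m+1 then aL s m i1
  else 4*(s*(blk m j + 1)) + 4*i1 - 1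

def WV (s m : ℕ) : Vt s m → ℕ
  | (Sum.inl _, j) => CW s m j.1
  | (Sum.inr i, j) => LW s m (i.1+1) j.1

lemma F0_split (s m i1 jc jl : ℕ) :
    F0 s m i1 jc jl = (if jl = jc + 1 then Lc s m i1 jc else 0)
      + (if jc = jl + 1 then Ll s m i1 jl else 0) := by
  unfold F0; split_ifs <;> omega

/-- sum over second coordinate, center at position j -/
lemma sum_F0_center (s m i1 : ℕ) (j : Fin (2*m+2)) :
    ∑ j' : Fin (2*m+2), F0 s m i1 j.1 j'.1
      = (if j.1 ≤ 2*m then Lc s m i1 j.1 else 0)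
        + (if 1 ≤ j.1 then Ll s m i1 (j.1-1) else 0) := by
  have hsplit : ∀ j' : Fin (2*m+2), F0 s m i1 j.1 j'.1
      = (if j'.1 = j.1 + 1 then Lc s m i1 j.1 else 0)
        + (if j.1 = j'.1 + 1 then Ll s m i1 j'.1 else 0) := fun j' => F0_split ..
  rw [Finset.sum_congr rfl (fun j' _ => hsplit j'), Finset.sum_add_distrib]
  congr 1
  · by_cases h : j.1 ≤ 2*m
    · rw [if_pos h]
      have hlt : j.1 + 1 < 2*m+2 := by omega
      have : ∀ j' : Fin (2*m+2), (j'.1 = j.1 + 1) = (j' = ⟨j.1+1, hlt⟩) := by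
        intro j'; simp [Fin.ext_iff]
      simp_rw [this]
      rw [Finset.sum_ite_eq' Finset.univ (⟨j.1+1, hlt⟩ : Fin (2*m+2))
        (fun _ => Lc s m i1 j.1)]
      simp
    · rw [if_neg h]
      apply Finset.sum_eq_zero
      intro j' _
      rw [if_neg (by omega)]
  · by_cases h : 1 ≤ j.1
    · rw [if_pos h]
      have hlt : j.1 - 1 < 2*m+2 := by omega
      have : ∀ j' : Fin (2*m+2), (j.1 = j'.1 + 1) = (j' = ⟨j.1-1, hlt⟩) := by
        intro j'; simp [Fin.ext_iff]; omega
      simp_rw [this]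
      rw [Finset.sum_ite_eq' Finset.univ (⟨j.1-1, hlt⟩ : Fin (2*m+2))
        (fun j' => Ll s m i1 j'.1)]
      simp
    · rw [if_neg h]
      apply Finset.sum_eq_zero
      intro j' _
      rw [if_neg (by omega)]

lemma sum_F0_leaf (s m i1 : ℕ) (j : Fin (2*m+2)) :
    ∑ j' : Fin (2*m+2), F0 s m i1 j'.1 j.1
      = (if 1 ≤ j.1 then Lc s m i1 (j.1-1) else 0)
        + (if j.1 ≤ 2*m then Ll s m i1 j.1 else 0) := by
  have hsplit : ∀ j' : Fin (2*m+2), F0 s m i1 j'.1 j.1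
      = (if j'.1 = j.1 - 1 ∧ 1 ≤ j.1 then Lc s m i1 j'.1 else 0)
        + (if j'.1 = j.1 + 1 then Ll s m i1 j.1 else 0) := by
    intro j'
    rw [F0_split]
    congr 1
    · by_cases h : j.1 = j'.1 + 1
      · rw [if_pos h, if_pos (by omega)]
      · rw [if_neg h, if_neg (by omega)]
  rw [Finset.sum_congr rfl (fun j' _ => hsplit j'), Finset.sum_add_distrib]
  congr 1
  · by_cases h : 1 ≤ j.1
    · have hlt : j.1 - 1 < 2*m+2 := by omega
      rw [if_pos h]
      have heq : ∀ j' : Fin (2*m+2), (j'.1 = j.1 - 1 ∧ 1 ≤ j.1) = (j' = ⟨j.1-1, hlt⟩) := by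
        intro j'; simp [Fin.ext_iff]; omega
      simp_rw [heq]
      rw [Finset.sum_ite_eq' Finset.univ (⟨j.1-1, hlt⟩ : Fin (2*m+2))
        (fun j' => Lc s m i1 j'.1)]
      simp
    · rw [if_neg h]
      apply Finset.sum_eq_zero
      intro j' _
      rw [if_neg (by omega)]
  · by_cases h : j.1 ≤ 2*m
    · rw [if_pos h]
      have hlt : j.1 + 1 < 2*m+2 := by omega
      have heq : ∀ j' : Fin (2*m+2), (j'.1 = j.1 + 1) = (j' = ⟨j.1+1, hlt⟩) := by
        intro j'; simp [Fin.ext_iff]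
      simp_rw [heq]
      rw [Finset.sum_ite_eq' Finset.univ (⟨j.1+1, hlt⟩ : Fin (2*m+2))
        (fun _ => Ll s m i1 j.1)]
      simp
    · rw [if_neg h]
      apply Finset.sum_eq_zero
      intro j' _
      rw [if_neg (by omega)]

end APX

namespace APX

open Finset

lemma vsum_center (s m : ℕ) (hs : 3 ≤ s) (z : Fin 1) (j : Fin (2*m+2)) :
    vertexSum (GG s m) (fl s m) (Sum.inl z, j) = CW s m j.1 := by
  unfold fl
  rw [vertexSum_eq_sum_univ (GG s m) (F s m) (F_comm s m) _
    (fun w hw => F_nonadj s m _ w hw)]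
  rw [Fintype.sum_prod_type]
  rw [Fintype.sum_sum_type]
  have hz : ∀ a : Fin 1, ∑ j' : Fin (2*m+2), F s m (Sum.inl z, j) (Sum.inl a, j') = 0 := by
    intro a; apply Finset.sum_eq_zero; intro j' _; rfl
  rw [Finset.sum_congr rfl (fun a _ => hz a), Finset.sum_const]
  simp only [smul_eq_mul, mul_zero, zero_add]
  have hF : ∀ (i : Fin s) (j' : Fin (2*m+2)),
      F s m (Sum.inl z, j) (Sum.inr i, j') = F0 s m (i.1+1) j.1 j'.1 := fun _ _ => rfl
  calc ∑ i : Fin s, ∑ j' : Fin (2*m+2), F s m (Sum.inl z, j) (Sum.inr i, j')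
      = ∑ i : Fin s, ((if j.1 ≤ 2*m then Lc s m (i.1+1) j.1 else 0)
          + (if 1 ≤ j.1 then Ll s m (i.1+1) (j.1-1) else 0)) := by
        refine Finset.sum_congr rfl (fun i _ => ?_)
        rw [Finset.sum_congr rfl (fun j' _ => hF i j'), sum_F0_center]
    _ = CW s m j.1 := by
        rw [Finset.sum_add_distrib]
        unfold CW
        congr 1
        · split_ifs with h
          · rw [Fin.sum_univ_eq_sum_range (fun i => Lc s m (i+1) j.1), LcS_eq s m j.1 hs]
          · simp
        · split_ifs with h
          · rw [Fin.sum_univ_eq_sum_range (fun i => Ll s m (i+1) (j.1-1)), LlS_eq s m _ hs]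
          · simp

end APX

namespace APX

open Finset

lemma LoRo_sum (s m b i1 : ℕ) (h1 : 1 ≤ i1) :
    Lo s m b i1 + Ro s m b i1 = 4*(s*(b+1)) + 4*i1 - 1 := by
  unfold Lo Ro
  have := oo_le m b
  have hr : 4*(s*(b+1)) = 2*(2*s*b) + 4*s := by ring
  omega

lemma vsum_leaf (s m : ℕ) (hs : 3 ≤ s) (hm : 1 ≤ m) (i : Fin s) (j : Fin (2*m+2)) :
    vertexSum (GG s m) (fl s m) (Sum.inr i, j) = LW s m (i.1+1) j.1 := by
  unfold fl
  rw [vertexSum_eq_sum_univ (GG s m) (F s m) (F_comm s m) _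
    (fun w hw => F_nonadj s m _ w hw)]
  rw [Fintype.sum_prod_type, Fintype.sum_sum_type]
  have hz : ∀ a : Fin s, ∑ j' : Fin (2*m+2), F s m (Sum.inr i, j) (Sum.inr a, j') = 0 := by
    intro a; apply Finset.sum_eq_zero; intro j' _; rfl
  rw [Finset.sum_congr rfl (fun a _ => hz a), Finset.sum_const]
  simp only [smul_eq_mul, mul_zero, add_zero]
  have hF : ∀ (a : Fin 1) (j' : Fin (2*m+2)),
      F s m (Sum.inr i, j) (Sum.inl a, j') = F0 s m (i.1+1) j'.1 j.1 := fun _ _ => rfl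
  rw [Finset.sum_congr rfl (fun (a : Fin 1) _ =>
    Finset.sum_congr rfl (fun j' _ => hF a j'))]
  rw [Finset.sum_const, Finset.card_univ, Fintype.card_fin, one_smul]  -- maybe structure differs
  rw [sum_F0_leaf]
  -- now case analysis on j
  unfold LW
  rcases Nat.eq_zero_or_pos j.1 with h0 | h0
  · rw [if_neg (by omega), if_pos (by omega), h0, if_pos rfl]
    unfold Ll
    rw [if_pos rfl]
    simp
  · rw [if_pos (show 1 ≤ j.1 by omega)]
    by_cases h2 : j.1 ≤ 2*m
    · rw [if_pos h2, if_neg (by omega), if_neg (by omega)]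
      have hLc : Lc s m (i.1+1) (j.1-1) = Lo s m (blk m j.1) (i.1+1) := by
        unfold Lc
        rw [if_neg (by omega)]
        congr 2
        omega
      have hLl : Ll s m (i.1+1) j.1 = Ro s m (blk m j.1) (i.1+1) := by
        unfold Ll
        rw [if_neg (by omega)]
      rw [hLc, hLl, LoRo_sum s m _ _ (by omega)]
    · rw [if_neg h2, if_neg (by omega), if_pos (by omega)]
      have : j.1 - 1 = 2*m := by omega
      rw [this]
      unfold Lc
      rw [if_pos rfl]
      simp

end APX

namespace APX

open Finset

def enc (s m : ℕ) : Fin s × Fin (2*m+1) × Bool → Sym2 (Vt s m)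
  | (i, k, false) => s(((Sum.inl 0 : Fin 1 ⊕ Fin s), (⟨k.1, by have := k.2; omega⟩ : Fin (2*m+2))),
      ((Sum.inr i : Fin 1 ⊕ Fin s), (⟨k.1+1, by have := k.2; omega⟩ : Fin (2*m+2))))
  | (i, k, true) => s(((Sum.inr i : Fin 1 ⊕ Fin s), (⟨k.1, by have := k.2; omega⟩ : Fin (2*m+2))),
      ((Sum.inl 0 : Fin 1 ⊕ Fin s), (⟨k.1+1, by have := k.2; omega⟩ : Fin (2*m+2))))

lemma fl_enc_false (s m : ℕ) (i : Fin s) (k : Fin (2*m+1)) :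
    fl s m (enc s m (i, k, false)) = Lc s m (i.1+1) k.1 := by
  show F0 s m (i.1+1) k.1 (k.1+1) = _
  unfold F0
  rw [if_pos rfl]

lemma fl_enc_true (s m : ℕ) (i : Fin s) (k : Fin (2*m+1)) :
    fl s m (enc s m (i, k, true)) = Ll s m (i.1+1) k.1 := by
  show F0 s m (i.1+1) (k.1+1) k.1 = _
  unfold F0
  rw [if_neg (by omega), if_pos rfl]

lemma GG_adj' (s m : ℕ) (x y : Fin 1 ⊕ Fin s) (j j' : Fin (2*m+2)) :
    (GG s m).Adj (x, j) (y, j') ↔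
      ((x.isLeft ∧ y.isRight ∨ x.isRight ∧ y.isLeft) ∧ (j.1 + 1 = j'.1 ∨ j'.1 + 1 = j.1)) :=
  GG_adj s m (x, j) (y, j')

lemma enc_mem (s m : ℕ) (x : Fin s × Fin (2*m+1) × Bool) :
    enc s m x ∈ (GG s m).edgeSet := by
  rcases x with ⟨i, k, d⟩
  cases d <;>
  · show s((_ : Vt s m), _) ∈ _
    rw [SimpleGraph.mem_edgeSet, GG_adj']
    exact ⟨by simp, by simp⟩

lemma edgeSet_eq (s m : ℕ) : (GG s m).edgeSet = Set.range (enc s m) := by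
  apply Set.Subset.antisymm
  · intro e he
    induction e using Sym2.ind with
    | _ u v =>
      rcases u with ⟨x | x, j⟩ <;> rcases v with ⟨y | y, j'⟩ <;>
        rw [SimpleGraph.mem_edgeSet, GG_adj'] at he <;>
        obtain ⟨hstar, hpath⟩ := he
      · simp at hstar
      · -- center (inl x, j), leaf (inr y, j')
        clear hstar
        obtain rfl : x = 0 := Subsingleton.elim _ _
        rcases hpath with hp | hp
        · refine ⟨(y, ⟨j.1, by have := j'.2; omega⟩, false), ?_⟩
          have h2 : ((Sum.inr y : Fin 1 ⊕ Fin s), (⟨j.1+1, by have := j'.2; omega⟩ : Fin (2*m+2)))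
              = (Sum.inr y, j') := Prod.ext rfl (Fin.ext hp)
          rw [← h2]
          rfl
        · refine ⟨(y, ⟨j'.1, by have := j.2; omega⟩, true), ?_⟩
          have h2 : ((Sum.inl 0 : Fin 1 ⊕ Fin s), (⟨j'.1+1, by have := j.2; omega⟩ : Fin (2*m+2)))
              = (Sum.inl 0, j) := Prod.ext rfl (Fin.ext hp)
          rw [Sym2.eq_swap, ← h2]
          rfl
      · -- leaf (inr x, j), center (inl y, j')
        clear hstar
        obtain rfl : y = 0 := Subsingleton.elim _ _
        rcases hpath with hp | hp
        · refine ⟨(x, ⟨j.1, by have := j'.2; omega⟩, true), ?_⟩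
          have h2 : ((Sum.inl 0 : Fin 1 ⊕ Fin s), (⟨j.1+1, by have := j'.2; omega⟩ : Fin (2*m+2)))
              = (Sum.inl 0, j') := Prod.ext rfl (Fin.ext hp)
          rw [← h2]
          rfl
        · refine ⟨(x, ⟨j'.1, by have := j.2; omega⟩, false), ?_⟩
          have h2 : ((Sum.inr x : Fin 1 ⊕ Fin s), (⟨j'.1+1, by have := j.2; omega⟩ : Fin (2*m+2)))
              = (Sum.inr x, j) := Prod.ext rfl (Fin.ext hp)
          rw [Sym2.eq_swap, ← h2]
          rfl
      · simp at hstar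
  · rintro e ⟨x, rfl⟩
    exact enc_mem s m x

lemma enc_inj (s m : ℕ) : Function.Injective (enc s m) := by
  rintro ⟨i, k, d⟩ ⟨i', k', d'⟩ h
  cases d <;> cases d' <;>
      simp only [enc, Sym2.eq_iff, Prod.mk.injEq, Sum.inl.injEq, Sum.inr.injEq,
        Fin.mk.injEq, Fin.ext_iff, Sum.elim_inl, reduceCtorEq, false_and, and_false,
        and_true, true_and, or_false, false_or] at h
  · obtain ⟨h2, h3, h4⟩ := h
    refine Prod.ext (Fin.ext h3) (Prod.ext (Fin.ext h2) rfl)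
  · omega
  · omega
  · obtain ⟨⟨h1, h2⟩, h3⟩ := h
    refine Prod.ext (Fin.ext h1) (Prod.ext (Fin.ext h2) rfl)

end APX

namespace APX

lemma blk_le (m p : ℕ) (hm : 1 ≤ m) (h1 : 1 ≤ p) (h2 : p ≤ 2*m) : blk m p ≤ 2*m-1 := by
  unfold blk; split <;> omega

lemma blk_inj (m p p' : ℕ) (hm : 1 ≤ m) (h1 : 1 ≤ p) (h2 : p ≤ 2*m)
    (h1' : 1 ≤ p') (h2' : p' ≤ 2*m) (h : blk m p = blk m p') : p = p' := by
  unfold blk at h; split at h <;> split at h <;> omega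

lemma aL_le (s m i1 : ℕ) (hs : 3 ≤ s) (hi : i1 ≤ s) : aL s m i1 ≤ 2*s := by
  have := ee_le s m; unfold aL; split <;> omega

lemma aL_ge (s m i1 : ℕ) (hs : 3 ≤ s) (hi : 1 ≤ i1) : 1 ≤ aL s m i1 := by
  unfold aL; split <;> omega

lemma bL_le (s m i1 : ℕ) (hs : 3 ≤ s) (hi : i1 ≤ s) : bL s m i1 ≤ 2*s := by
  unfold bL; split <;> omega

lemma bL_ge (s m i1 : ℕ) (hs : 3 ≤ s) (hi : 1 ≤ i1) : 1 ≤ bL s m i1 := by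
  unfold bL; split <;> omega

lemma aL_inj (s m i1 i1' : ℕ) (hs : 3 ≤ s) (h1 : 1 ≤ i1) (h2 : i1 ≤ s)
    (h1' : 1 ≤ i1') (h2' : i1' ≤ s) (h : aL s m i1 = aL s m i1') : i1 = i1' := by
  have := ee_le s m; unfold aL at h; split at h <;> split at h <;> omega

lemma bL_inj (s m i1 i1' : ℕ) (hs : 3 ≤ s) (h1 : 1 ≤ i1) (h2 : i1 ≤ s)
    (h1' : 1 ≤ i1') (h2' : i1' ≤ s) (h : bL s m i1 = bL s m i1') : i1 = i1' := by
  unfold bL at h; split at h <;> split at h <;> omega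

lemma aL_ne_bL (s m i1 i1' : ℕ) (hs : 3 ≤ s) (h1 : 1 ≤ i1) (h2 : i1 ≤ s)
    (h1' : 1 ≤ i1') (h2' : i1' ≤ s) : aL s m i1 ≠ bL s m i1' := by
  have := ee_le s m; unfold aL bL; split <;> split <;> omega

lemma Lo_ge (s m b i1 : ℕ) (hi : 1 ≤ i1) : 2*s + 1 ≤ Lo s m b i1 := by
  unfold Lo; have := oo_le m b; omega

lemma Ro_ge (s m b i1 : ℕ) (hi : 1 ≤ i1) : 2*s + 1 ≤ Ro s m b i1 := by
  unfold Ro; have := oo_le m b; omega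

lemma Lo_le (s m b i1 : ℕ) (hm : 1 ≤ m) (hb : b ≤ 2*m-1) (hi0 : 1 ≤ i1) (hi : i1 ≤ s) :
    Lo s m b i1 ≤ 2*s*(2*m+1) := by
  unfold Lo
  have ho := oo_le m b
  have h1 : 2*s*b ≤ 2*s*(2*m-1) := Nat.mul_le_mul_left _ hb
  obtain ⟨m', rfl⟩ : ∃ m', m = m'+1 := ⟨m-1, by omega⟩
  have h2 : 2*(m'+1)-1 = 2*m'+1 := by omega
  rw [h2] at h1
  have h3 : 2*s*(2*(m'+1)+1) = 2*s*(2*m'+1) + 4*s := by ring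
  omega

lemma Ro_le (s m b i1 : ℕ) (hm : 1 ≤ m) (hb : b ≤ 2*m-1) (hi0 : 1 ≤ i1) (hi : i1 ≤ s) :
    Ro s m b i1 ≤ 2*s*(2*m+1) := by
  unfold Ro
  have ho := oo_le m b
  have h1 : 2*s*b ≤ 2*s*(2*m-1) := Nat.mul_le_mul_left _ hb
  obtain ⟨m', rfl⟩ : ∃ m', m = m'+1 := ⟨m-1, by omega⟩
  have h2 : 2*(m'+1)-1 = 2*m'+1 := by omega
  rw [h2] at h1
  have h3 : 2*s*(2*(m'+1)+1) = 2*s*(2*m'+1) + 4*s := by ring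
  omega

lemma block_eq (s b c b' c' : ℕ) (hc1 : 1 ≤ c) (hc2 : c ≤ 2*s) (hc1' : 1 ≤ c')
    (hc2' : c' ≤ 2*s) (h : 2*s*b + c = 2*s*b' + c') : b = b' := by
  rcases lt_trichotomy b b' with hl | he | hl
  · have h1 : 2*s*(b+1) ≤ 2*s*b' := Nat.mul_le_mul_left _ (by omega)
    have h2 : 2*s*(b+1) = 2*s*b + 2*s := by ring
    omega
  · exact he
  · have h1 : 2*s*(b'+1) ≤ 2*s*b := Nat.mul_le_mul_left _ (by omega)
    have h2 : 2*s*(b'+1) = 2*s*b' + 2*s := by ring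
    omega

lemma Lo_inj (s m b i1 b' i1' : ℕ) (hs : 3 ≤ s) (h1 : 1 ≤ i1) (h2 : i1 ≤ s)
    (h1' : 1 ≤ i1') (h2' : i1' ≤ s) (h : Lo s m b i1 = Lo s m b' i1') :
    b = b' ∧ i1 = i1' := by
  have ho := oo_le m b; have ho' := oo_le m b'
  unfold Lo at h
  have hb : b = b' := by
    apply block_eq s b (2*i1-1+oo m b) b' (2*i1'-1+oo m b') (by omega) (by omega)
      (by omega) (by omega)
    omega
  subst hb
  exact ⟨rfl, by omega⟩

lemma Ro_inj (s m b i1 b' i1' : ℕ) (hs : 3 ≤ s) (h1 : 1 ≤ i1) (h2 : i1 ≤ s)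
    (h1' : 1 ≤ i1') (h2' : i1' ≤ s) (h : Ro s m b i1 = Ro s m b' i1') :
    b = b' ∧ i1 = i1' := by
  have ho := oo_le m b; have ho' := oo_le m b'
  unfold Ro at h
  have hb : b = b' := by
    apply block_eq s b (2*i1-oo m b) b' (2*i1'-oo m b') (by omega) (by omega)
      (by omega) (by omega)
    omega
  subst hb
  exact ⟨rfl, by omega⟩

lemma Lo_ne_Ro (s m b i1 b' i1' : ℕ) (hs : 3 ≤ s) (h1 : 1 ≤ i1) (h2 : i1 ≤ s)
    (h1' : 1 ≤ i1') (h2' : i1' ≤ s) : Lo s m b i1 ≠ Ro s m b' i1' := by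
  intro h
  have ho := oo_le m b; have ho' := oo_le m b'
  unfold Lo Ro at h
  have hb : b = b' := by
    apply block_eq s b (2*i1-1+oo m b) b' (2*i1'-oo m b') (by omega) (by omega)
      (by omega) (by omega)
    omega
  subst hb
  omega

end APX

namespace APX

lemma Lc_ge (s m i1 k : ℕ) (hs : 3 ≤ s) (hi : 1 ≤ i1) : 1 ≤ Lc s m i1 k := by
  unfold Lc; split
  · exact aL_ge s m i1 hs hi
  · have := Lo_ge s m (blk m (k+1)) i1 hi; omega

lemma Lc_le (s m i1 k : ℕ) (hs : 3 ≤ s) (hm : 1 ≤ m) (hi0 : 1 ≤ i1) (hi : i1 ≤ s)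
    (hk : k ≤ 2*m) : Lc s m i1 k ≤ 2*s*(2*m+1) := by
  unfold Lc; split
  · have h1 := aL_le s m i1 hs hi
    have h2 : 2*s*1 ≤ 2*s*(2*m+1) := Nat.mul_le_mul_left _ (by omega)
    omega
  · exact Lo_le s m _ i1 hm (blk_le m (k+1) hm (by omega) (by omega)) hi0 hi

lemma Ll_ge (s m i1 k : ℕ) (hs : 3 ≤ s) (hi : 1 ≤ i1) : 1 ≤ Ll s m i1 k := by
  unfold Ll; split
  · exact bL_ge s m i1 hs hi
  · have := Ro_ge s m (blk m k) i1 hi; omega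

lemma Ll_le (s m i1 k : ℕ) (hs : 3 ≤ s) (hm : 1 ≤ m) (hi0 : 1 ≤ i1) (hi : i1 ≤ s)
    (hk : k ≤ 2*m) : Ll s m i1 k ≤ 2*s*(2*m+1) := by
  unfold Ll; split
  · have h1 := bL_le s m i1 hs hi
    have h2 : 2*s*1 ≤ 2*s*(2*m+1) := Nat.mul_le_mul_left _ (by omega)
    omega
  · exact Ro_le s m _ i1 hm (blk_le m k hm (by omega) (by omega)) hi0 hi

lemma Lc_inj (s m i1 k i1' k' : ℕ) (hs : 3 ≤ s) (hm : 1 ≤ m)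
    (h1 : 1 ≤ i1) (h2 : i1 ≤ s) (h1' : 1 ≤ i1') (h2' : i1' ≤ s)
    (hk : k ≤ 2*m) (hk' : k' ≤ 2*m)
    (h : Lc s m i1 k = Lc s m i1' k') : k = k' ∧ i1 = i1' := by
  unfold Lc at h; split at h <;> split at h
  · exact ⟨by omega, aL_inj s m i1 i1' hs h1 h2 h1' h2' h⟩
  · have := aL_le s m i1 hs h2; have := Lo_ge s m (blk m (k'+1)) i1' h1'; omega
  · have := aL_le s m i1' hs h2'; have := Lo_ge s m (blk m (k+1)) i1 h1; omega
  · obtain ⟨hb, hi⟩ := Lo_inj s m _ i1 _ i1' hs h1 h2 h1' h2' h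
    have := blk_inj m (k+1) (k'+1) hm (by omega) (by omega) (by omega) (by omega) hb
    omega

lemma Ll_inj (s m i1 k i1' k' : ℕ) (hs : 3 ≤ s) (hm : 1 ≤ m)
    (h1 : 1 ≤ i1) (h2 : i1 ≤ s) (h1' : 1 ≤ i1') (h2' : i1' ≤ s)
    (hk : k ≤ 2*m) (hk' : k' ≤ 2*m)
    (h : Ll s m i1 k = Ll s m i1' k') : k = k' ∧ i1 = i1' := by
  unfold Ll at h; split at h <;> split at h
  · exact ⟨by omega, bL_inj s m i1 i1' hs h1 h2 h1' h2' h⟩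
  · have := bL_le s m i1 hs h2; have := Ro_ge s m (blk m k') i1' h1'; omega
  · have := bL_le s m i1' hs h2'; have := Ro_ge s m (blk m k) i1 h1; omega
  · obtain ⟨hb, hi⟩ := Ro_inj s m _ i1 _ i1' hs h1 h2 h1' h2' h
    have := blk_inj m k k' hm (by omega) (by omega) (by omega) (by omega) hb
    omega

lemma Lc_ne_Ll (s m i1 k i1' k' : ℕ) (hs : 3 ≤ s) (hm : 1 ≤ m)
    (h1 : 1 ≤ i1) (h2 : i1 ≤ s) (h1' : 1 ≤ i1') (h2' : i1' ≤ s) :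
    Lc s m i1 k ≠ Ll s m i1' k' := by
  unfold Lc Ll; split <;> split
  · exact aL_ne_bL s m i1 i1' hs h1 h2 h1' h2'
  · intro h
    have := aL_le s m i1 hs h2; have := Ro_ge s m (blk m k') i1' h1'; omega
  · intro h
    have := bL_le s m i1' hs h2'; have := Lo_ge s m (blk m (k+1)) i1 h1; omega
  · exact Lo_ne_Ro s m _ i1 _ i1' hs h1 h2 h1' h2'

end APX

namespace APX

open scoped Classical in
lemma edgeFinset_eq (s m : ℕ) :
    (GG s m).edgeFinset = Finset.univ.image (enc s m) := by
  ext e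
  rw [SimpleGraph.mem_edgeFinset, edgeSet_eq, Set.mem_range]
  simp only [Finset.mem_image, Finset.mem_univ, true_and]

open scoped Classical in
lemma card_edgeFinset (s m : ℕ) : (GG s m).edgeFinset.card = 2*s*(2*m+1) := by
  rw [edgeFinset_eq, Finset.card_image_of_injective _ (enc_inj s m), Finset.card_univ]
  simp only [Fintype.card_prod, Fintype.card_fin, Fintype.card_bool]
  ring

lemma fl_mem_Icc (s m : ℕ) (hs : 3 ≤ s) (hm : 1 ≤ m) :
    ∀ e ∈ (GG s m).edgeSet, fl s m e ∈ Set.Icc 1 (2*s*(2*m+1)) := by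
  intro e he
  rw [edgeSet_eq] at he
  obtain ⟨⟨i, k, d⟩, rfl⟩ := he
  have hi1 : 1 ≤ i.1 + 1 := by omega
  have hi2 : i.1 + 1 ≤ s := i.2
  have hk : k.1 ≤ 2*m := by have := k.2; omega
  cases d
  · rw [fl_enc_false]
    exact ⟨Lc_ge s m _ _ hs hi1, Lc_le s m _ _ hs hm hi1 hi2 hk⟩
  · rw [fl_enc_true]
    exact ⟨Ll_ge s m _ _ hs hi1, Ll_le s m _ _ hs hm hi1 hi2 hk⟩

lemma fl_injOn (s m : ℕ) (hs : 3 ≤ s) (hm : 1 ≤ m) :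
    Set.InjOn (fl s m) (GG s m).edgeSet := by
  intro e1 h1 e2 h2 hf
  rw [edgeSet_eq] at h1 h2
  obtain ⟨⟨i, k, d⟩, rfl⟩ := h1
  obtain ⟨⟨i', k', d'⟩, rfl⟩ := h2
  have hi1 : 1 ≤ i.1 + 1 := by omega
  have hi2 : i.1 + 1 ≤ s := i.2
  have hk : k.1 ≤ 2*m := by have := k.2; omega
  have hi1' : 1 ≤ i'.1 + 1 := by omega
  have hi2' : i'.1 + 1 ≤ s := i'.2
  have hk' : k'.1 ≤ 2*m := by have := k'.2; omega
  cases d <;> cases d'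
  · rw [fl_enc_false, fl_enc_false] at hf
    obtain ⟨hkk, hii⟩ := Lc_inj s m _ _ _ _ hs hm hi1 hi2 hi1' hi2' hk hk' hf
    obtain rfl : i = i' := Fin.ext (by omega)
    obtain rfl : k = k' := Fin.ext (by omega)
    rfl
  · rw [fl_enc_false, fl_enc_true] at hf
    exact absurd hf (Lc_ne_Ll s m _ _ _ _ hs hm hi1 hi2 hi1' hi2')
  · rw [fl_enc_true, fl_enc_false] at hf
    exact absurd hf.symm (Lc_ne_Ll s m _ _ _ _ hs hm hi1' hi2' hi1 hi2)
  · rw [fl_enc_true, fl_enc_true] at hf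
    obtain ⟨hkk, hii⟩ := Ll_inj s m _ _ _ _ hs hm hi1 hi2 hi1' hi2' hk hk' hf
    obtain rfl : i = i' := Fin.ext (by omega)
    obtain rfl : k = k' := Fin.ext (by omega)
    rfl

open scoped Classical in
lemma fl_image (s m : ℕ) (hs : 3 ≤ s) (hm : 1 ≤ m) :
    ((GG s m).edgeFinset).image (fl s m) = Finset.Icc 1 (2*s*(2*m+1)) := by
  apply Finset.eq_of_subset_of_card_le
  · intro x hx
    rw [Finset.mem_image] at hx
    obtain ⟨e, he, rfl⟩ := hx
    rw [SimpleGraph.mem_edgeFinset] at he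
    have := fl_mem_Icc s m hs hm e he
    rw [Finset.mem_Icc]
    exact ⟨this.1, this.2⟩
  · rw [Nat.card_Icc]
    rw [Finset.card_image_of_injOn (by
      have h := fl_injOn s m hs hm
      rw [← SimpleGraph.coe_edgeFinset] at h
      exact h)]
    rw [card_edgeFinset]
    omega

lemma fl_bijOn (s m : ℕ) (hs : 3 ≤ s) (hm : 1 ≤ m) :
    Set.BijOn (fl s m) (GG s m).edgeSet (Set.Icc 1 (2*s*(2*m+1))) := by
  refine ⟨fun e he => fl_mem_Icc s m hs hm e he, fl_injOn s m hs hm, ?_⟩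
  intro x hx
  have h1 : x ∈ Finset.Icc 1 (2*s*(2*m+1)) := by
    rw [Finset.mem_Icc]; exact ⟨hx.1, hx.2⟩
  classical
  rw [← fl_image s m hs hm, Finset.mem_image] at h1
  obtain ⟨e, he, rfl⟩ := h1
  exact ⟨e, by rwa [← SimpleGraph.mem_edgeFinset], rfl⟩

end APX

namespace APX

lemma CW_eval (s m j : ℕ) (hs : 3 ≤ s) (hm : 1 ≤ m) (hj : j < 2*m+2) :
    (j = 0 ∧ CW s m j = 2*(s*s*m) + s*s + s)
  ∨ (j = 1 ∧ CW s m j + ee s m = 2*(s*s*m) + 4*(s*s) + TT s + s*(m%2))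
  ∨ (j = 2*m ∧ CW s m j = 3*(s*s) + (s - s*(m%2)) + TT s + ee s m)
  ∨ (j = 2*m+1 ∧ CW s m j = 4*(s*s*m) + s*s)
  ∨ (∃ t, 2 ≤ t ∧ t ≤ m ∧ j = 2*(m+1-t)
      ∧ (CW s m j = 4*(s*s*t) ∨ CW s m j = 4*(s*s*t) + 2*s))
  ∨ (∃ t, m+2 ≤ t ∧ t ≤ 2*m ∧ j = 2*(t-m)-1
      ∧ (CW s m j = 4*(s*s*t) ∨ CW s m j = 4*(s*s*t) + 2*s)) := by
  have hee := ee_le s m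
  have hTT := TT_ge s hs
  rcases Nat.eq_zero_or_pos j with rfl | hj0
  · -- j = 0
    left
    refine ⟨rfl, ?_⟩
    unfold CW
    rw [if_pos (by omega), if_neg (by omega)]
    unfold LcS
    rw [if_neg (by omega)]
    have hb : blk m (0+1) = m-1 := by unfold blk; split <;> omega
    rw [hb]
    have ho : oo m (m-1) = 1 := by unfold oo; split <;> omega
    rw [ho]
    have e1 : m-1+1 = m := by omega
    rw [e1]
    omega
  rcases Nat.lt_or_ge j 2 with hj1 | hj2
  · -- j = 1
    have hj' : j = 1 := by omega
    subst hj'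
    right; left
    refine ⟨rfl, ?_⟩
    unfold CW
    rw [if_pos (by omega), if_pos (by omega)]
    unfold LcS LlS
    rw [if_neg (by omega), if_pos rfl]
    have hb : blk m (1+1) = m := by unfold blk; split <;> omega
    rw [hb]
    have ho : oo m m = m % 2 := by unfold oo; split <;> omega
    rw [ho]
    have e3 : s*s*(m+1) = s*s*m + s*s := Nat.mul_succ _ _
    omega
  rcases Nat.lt_or_ge j (2*m) with hjmid | hjend
  · -- interior: 2 ≤ j ≤ 2m-1
    rcases Nat.even_or_odd j with ⟨u, hu⟩ | ⟨u, hu⟩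
    · -- j = 2u, 1 ≤ u ≤ m-1
      subst hu
      have hu1 : 1 ≤ u := by omega
      have hu2 : u ≤ m-1 := by omega
      right; right; right; right; left
      refine ⟨m+1-u, by omega, by omega, by omega, ?_⟩
      unfold CW
      rw [if_pos (by omega), if_pos (by omega)]
      unfold LcS LlS
      rw [if_neg (by omega), if_neg (by omega)]
      have hb1 : blk m (u+u+1) = m-1-u := by unfold blk; split <;> omega
      have hb2 : blk m (u+u-1) = m-u := by unfold blk; split <;> omega
      rw [hb1, hb2]
      have ho1 : oo m (m-1-u) = (u+1) % 2 := by unfold oo; split <;> omega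
      have ho2 : oo m (m-u) = u % 2 := by unfold oo; split <;> omega
      rw [ho1, ho2]
      have e1 : m-1-u+1 = m-u := by omega
      rw [e1]
      have e3 : s*s*(m-u+1) = s*s*(m-u) + s*s := Nat.mul_succ _ _
      have e4 : s*s*(m+1-u) = s*s*(m-u) + s*s := by
        rw [show m+1-u = (m-u)+1 by omega, Nat.mul_succ]
      rcases Nat.mod_two_eq_zero_or_one u with hpar | hpar
      · rw [hpar, show (u+1) % 2 = 1 by omega, Nat.mul_one, Nat.mul_zero]
        right; omega
      · rw [hpar, show (u+1) % 2 = 0 by omega, Nat.mul_one, Nat.mul_zero]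
        left; omega
    · -- j = 2u+1, 1 ≤ u ≤ m-1
      subst hu
      have hu1 : 1 ≤ u := by omega
      have hu2 : u ≤ m-1 := by omega
      right; right; right; right; right
      refine ⟨m+u+1, by omega, by omega, by omega, ?_⟩
      unfold CW
      rw [if_pos (by omega), if_pos (by omega)]
      unfold LcS LlS
      rw [if_neg (by omega), if_neg (by omega)]
      have hb1 : blk m (2*u+1+1) = m+u := by unfold blk; split <;> omega
      have hb2 : blk m (2*u+1-1) = m+u-1 := by unfold blk; split <;> omega
      rw [hb1, hb2]
      have ho1 : oo m (m+u) = (m+u) % 2 := by unfold oo; split <;> omega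
      have ho2 : oo m (m+u-1) = (m+u+1) % 2 := by unfold oo; split <;> omega
      rw [ho1, ho2]
      have e1 : m+u-1+1 = m+u := by omega
      rw [e1]
      have e3 : s*s*(m+u+1) = s*s*(m+u) + s*s := Nat.mul_succ _ _
      rcases Nat.mod_two_eq_zero_or_one (m+u) with hpar | hpar
      · rw [hpar, show (m+u+1) % 2 = 1 by omega, Nat.mul_one, Nat.mul_zero]
        left; omega
      · rw [hpar, show (m+u+1) % 2 = 0 by omega, Nat.mul_one, Nat.mul_zero]
        right; omega
  rcases Nat.eq_or_lt_of_le hjend with hj2m | hjlast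
  · -- j = 2m
    right; right; left
    refine ⟨hj2m.symm, ?_⟩
    rw [← hj2m]
    unfold CW
    rw [if_pos (by omega), if_pos (by omega)]
    unfold LcS LlS
    rw [if_pos rfl, if_neg (by omega)]
    have hb : blk m (2*m-1) = 0 := by unfold blk; split <;> omega
    rw [hb]
    have ho : oo m 0 = m % 2 := by unfold oo; split <;> omega
    rw [ho]
    have e3 : s*s*(0+1) = s*s := by ring
    omega
  · -- j = 2m+1
    have hj' : j = 2*m+1 := by omega
    subst hj'
    right; right; right; left
    refine ⟨rfl, ?_⟩
    unfold CW
    rw [if_neg (by omega), if_pos (by omega)]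
    unfold LlS
    rw [if_neg (by omega)]
    have hb : blk m (2*m+1-1) = 2*m-1 := by unfold blk; split <;> omega
    rw [hb]
    have ho : oo m (2*m-1) = 1 := by unfold oo; split <;> omega
    rw [ho]
    have e1 : 2*m-1+1 = 2*m := by omega
    rw [e1]
    have e3 : s*s*(2*m) = 2*(s*s*m) := by ring
    omega

end APX

namespace APX

lemma int_eq (s : ℕ) (hs : 3 ≤ s) {t t' a a' : ℕ} (ha : a = 0 ∨ a = 2*s)
    (ha' : a' = 0 ∨ a' = 2*s) (h : 4*(s*s*t) + a = 4*(s*s*t') + a') : t = t' := by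
  have hq := sq_ge s hs
  rcases lt_trichotomy t t' with hl | he | hl
  · have hmul : s*s*(t+1) ≤ s*s*t' := Nat.mul_le_mul_left _ (by omega)
    have hsucc : s*s*(t+1) = s*s*t + s*s := Nat.mul_succ _ _
    omega
  · exact he
  · have hmul : s*s*(t'+1) ≤ s*s*t := Nat.mul_le_mul_left _ (by omega)
    have hsucc : s*s*(t'+1) = s*s*t' + s*s := Nat.mul_succ _ _
    omega

lemma CW_inj (s m j j' : ℕ) (hs : 3 ≤ s) (hm : 1 ≤ m) (hj : j < 2*m+2)
    (hj' : j' < 2*m+2) (h : CW s m j = CW s m j') : j = j' := by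
  have hq := sq_ge s hs
  have h2T := two_TT s
  have hee := ee_le s m
  have hTT := TT_ge s hs
  have hμ : s*(m%2) = 0 ∨ s*(m%2) = s := by
    rcases Nat.mod_two_eq_zero_or_one m with h' | h' <;> rw [h'] <;> simp
  have hm1 : s*s*1 ≤ s*s*m := Nat.mul_le_mul_left _ hm
  have hs1 : s*s*1 = s*s := by ring
  have hnb := notBad s m hs
  -- helper for C4 vs interior
  have hC4 : ∀ t a, 2 ≤ t → (a = 0 ∨ a = 2*s) → CW s m 1 + ee s m
      = 2*(s*s*m) + 4*(s*s) + TT s + s*(m%2) → CW s m 1 ≠ 4*(s*s*t) + a := by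
    intro t a ht ha he1 hcontra
    apply hnb
    have hV : V4 s m = CW s m 1 + ee s m := by unfold V4; omega
    have hW : V4 s m - ee s m = CW s m 1 := by omega
    rw [hW, hcontra]
    have hr : 4*(s*s*t) = 4*(s*s)*t := by ring
    rw [hr]
    unfold Bad
    rw [Nat.mul_add_mod, Nat.mod_eq_of_lt (by omega)]
    rcases ha with rfl | rfl
    · left; rfl
    · right; rfl
  rcases CW_eval s m j hs hm hj with ⟨rfl, e1⟩ | ⟨rfl, e1⟩ | ⟨rfl, e1⟩ | ⟨rfl, e1⟩
    | ⟨t, ht1, ht2, hjt, e1⟩ | ⟨t, ht1, ht2, hjt, e1⟩ <;>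
    rcases CW_eval s m j' hs hm hj' with ⟨rfl, e2⟩ | ⟨rfl, e2⟩ | ⟨rfl, e2⟩ | ⟨rfl, e2⟩
      | ⟨t', ht1', ht2', hjt', e2⟩ | ⟨t', ht1', ht2', hjt', e2⟩
  -- row 1 : j = 0 (C1)
  · rfl
  · omega
  · -- C1 vs C3
    rcases Nat.lt_or_ge m 2 with hm2 | hm2
    · have : m = 1 := by omega
      subst this
      omega
    · have hm2' : s*s*2 ≤ s*s*m := Nat.mul_le_mul_left _ hm2
      have : s*s*2 = 2*(s*s) := by ring
      omega
  · omega
  · -- C1 vs interior-even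
    exfalso
    rw [e1] at h
    rcases Nat.lt_or_ge (4*t') (2*m+1) with hc | hc
    · have hmul : s*s*(4*t') ≤ s*s*(2*m) := Nat.mul_le_mul_left _ (by omega)
      have r1 : s*s*(4*t') = 4*(s*s*t') := by ring
      have r2 : s*s*(2*m) = 2*(s*s*m) := by ring
      omega
    · have hc2 : 2*m+2 ≤ 4*t' := by omega
      have hmul : s*s*(2*m+2) ≤ s*s*(4*t') := Nat.mul_le_mul_left _ hc2
      have r1 : s*s*(4*t') = 4*(s*s*t') := by ring
      have r2 : s*s*(2*m+2) = 2*(s*s*m) + 2*(s*s) := by ring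
      omega
  · -- C1 vs interior-odd (same)
    exfalso
    rw [e1] at h
    rcases Nat.lt_or_ge (4*t') (2*m+1) with hc | hc
    · have hmul : s*s*(4*t') ≤ s*s*(2*m) := Nat.mul_le_mul_left _ (by omega)
      have r1 : s*s*(4*t') = 4*(s*s*t') := by ring
      have r2 : s*s*(2*m) = 2*(s*s*m) := by ring
      omega
    · have hc2 : 2*m+2 ≤ 4*t' := by omega
      have hmul : s*s*(2*m+2) ≤ s*s*(4*t') := Nat.mul_le_mul_left _ hc2
      have r1 : s*s*(4*t') = 4*(s*s*t') := by ring
      have r2 : s*s*(2*m+2) = 2*(s*s*m) + 2*(s*s) := by ring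
      omega
  -- row 2 : j = 1 (C4)
  · omega
  · rfl
  · -- C4 vs C3
    omega
  · -- C4 vs C6
    exfalso
    rcases Nat.lt_or_ge m 2 with hm2 | hm2
    · have : m = 1 := by omega
      subst this
      omega
    · rcases Nat.lt_or_ge m 3 with hm3 | hm3
      · have : m = 2 := by omega
        subst this
        have r1 : s*s*2 = 2*(s*s) := by ring
        omega
      · have hmul : s*s*3 ≤ s*s*m := Nat.mul_le_mul_left _ hm3
        have r1 : s*s*3 = 3*(s*s) := by ring
        omega
  · exfalso
    rcases e2 with e2' | e2'
    · exact hC4 t' 0 (by omega) (Or.inl rfl) e1 (by omega)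
    · exact hC4 t' (2*s) (by omega) (Or.inr rfl) e1 (by omega)
  · exfalso
    rcases e2 with e2' | e2'
    · exact hC4 t' 0 (by omega) (Or.inl rfl) e1 (by omega)
    · exact hC4 t' (2*s) (by omega) (Or.inr rfl) e1 (by omega)
  -- row 3 : j = 2m (C3)
  · rcases Nat.lt_or_ge m 2 with hm2 | hm2
    · have : m = 1 := by omega
      subst this
      omega
    · have hm2' : s*s*2 ≤ s*s*m := Nat.mul_le_mul_left _ hm2
      have : s*s*2 = 2*(s*s) := by ring
      omega
  · omega
  · rfl
  · omega
  · -- C3 vs interior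
    exfalso
    have hmul : s*s*2 ≤ s*s*t' := Nat.mul_le_mul_left _ ht1'
    have r1 : s*s*2 = 2*(s*s) := by ring
    omega
  · exfalso
    have hmul : s*s*2 ≤ s*s*t' := Nat.mul_le_mul_left _ (by omega)
    have r1 : s*s*2 = 2*(s*s) := by ring
    omega
  -- row 4 : j = 2m+1 (C6)
  · omega
  · -- C6 vs C4
    exfalso
    rcases Nat.lt_or_ge m 2 with hm2 | hm2
    · have : m = 1 := by omega
      subst this
      omega
    · rcases Nat.lt_or_ge m 3 with hm3 | hm3
      · have : m = 2 := by omega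
        subst this
        have r1 : s*s*2 = 2*(s*s) := by ring
        omega
      · have hmul : s*s*3 ≤ s*s*m := Nat.mul_le_mul_left _ hm3
        have r1 : s*s*3 = 3*(s*s) := by ring
        omega
  · omega
  · rfl
  · -- C6 vs interior
    exfalso
    rcases Nat.lt_or_ge t' (m+1) with hc | hc
    · have hmul : s*s*t' ≤ s*s*m := Nat.mul_le_mul_left _ (by omega)
      omega
    · have hmul : s*s*(m+1) ≤ s*s*t' := Nat.mul_le_mul_left _ hc
      have r1 : s*s*(m+1) = s*s*m + s*s := Nat.mul_succ _ _
      omega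
  · exfalso
    rcases Nat.lt_or_ge t' (m+1) with hc | hc
    · have hmul : s*s*t' ≤ s*s*m := Nat.mul_le_mul_left _ (by omega)
      omega
    · have hmul : s*s*(m+1) ≤ s*s*t' := Nat.mul_le_mul_left _ hc
      have r1 : s*s*(m+1) = s*s*m + s*s := Nat.mul_succ _ _
      omega
  -- row 5 : interior even
  · exfalso
    rw [e2] at h
    rcases Nat.lt_or_ge (4*t) (2*m+1) with hc | hc
    · have hmul : s*s*(4*t) ≤ s*s*(2*m) := Nat.mul_le_mul_left _ (by omega)
      have r1 : s*s*(4*t) = 4*(s*s*t) := by ring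
      have r2 : s*s*(2*m) = 2*(s*s*m) := by ring
      omega
    · have hc2 : 2*m+2 ≤ 4*t := by omega
      have hmul : s*s*(2*m+2) ≤ s*s*(4*t) := Nat.mul_le_mul_left _ hc2
      have r1 : s*s*(4*t) = 4*(s*s*t) := by ring
      have r2 : s*s*(2*m+2) = 2*(s*s*m) + 2*(s*s) := by ring
      omega
  · exfalso
    rcases e1 with e1' | e1'
    · exact hC4 t 0 (by omega) (Or.inl rfl) e2 (by omega)
    · exact hC4 t (2*s) (by omega) (Or.inr rfl) e2 (by omega)
  · exfalso
    have hmul : s*s*2 ≤ s*s*t := Nat.mul_le_mul_left _ ht1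
    have r1 : s*s*2 = 2*(s*s) := by ring
    omega
  · exfalso
    rcases Nat.lt_or_ge t (m+1) with hc | hc
    · have hmul : s*s*t ≤ s*s*m := Nat.mul_le_mul_left _ (by omega)
      omega
    · have hmul : s*s*(m+1) ≤ s*s*t := Nat.mul_le_mul_left _ hc
      have r1 : s*s*(m+1) = s*s*m + s*s := Nat.mul_succ _ _
      omega
  · -- int-even vs int-even
    have ht : t = t' := by
      rcases e1 with e1' | e1' <;> rcases e2 with e2' | e2' <;>
        [exact int_eq s hs (Or.inl rfl) (Or.inl rfl) (by omega);
         exact int_eq s hs (Or.inl rfl) (Or.inr rfl) (by omega);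
         exact int_eq s hs (Or.inr rfl) (Or.inl rfl) (by omega);
         exact int_eq s hs (Or.inr rfl) (Or.inr rfl) (by omega)]
    omega
  · -- int-even vs int-odd : t ≤ m < m+2 ≤ t'
    exfalso
    have ht : t = t' := by
      rcases e1 with e1' | e1' <;> rcases e2 with e2' | e2' <;>
        [exact int_eq s hs (Or.inl rfl) (Or.inl rfl) (by omega);
         exact int_eq s hs (Or.inl rfl) (Or.inr rfl) (by omega);
         exact int_eq s hs (Or.inr rfl) (Or.inl rfl) (by omega);
         exact int_eq s hs (Or.inr rfl) (Or.inr rfl) (by omega)]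
    omega
  -- row 6 : interior odd
  · exfalso
    rw [e2] at h
    rcases Nat.lt_or_ge (4*t) (2*m+1) with hc | hc
    · have hmul : s*s*(4*t) ≤ s*s*(2*m) := Nat.mul_le_mul_left _ (by omega)
      have r1 : s*s*(4*t) = 4*(s*s*t) := by ring
      have r2 : s*s*(2*m) = 2*(s*s*m) := by ring
      omega
    · have hc2 : 2*m+2 ≤ 4*t := by omega
      have hmul : s*s*(2*m+2) ≤ s*s*(4*t) := Nat.mul_le_mul_left _ hc2
      have r1 : s*s*(4*t) = 4*(s*s*t) := by ring
      have r2 : s*s*(2*m+2) = 2*(s*s*m) + 2*(s*s) := by ring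
      omega
  · exfalso
    rcases e1 with e1' | e1'
    · exact hC4 t 0 (by omega) (Or.inl rfl) e2 (by omega)
    · exact hC4 t (2*s) (by omega) (Or.inr rfl) e2 (by omega)
  · exfalso
    have hmul : s*s*2 ≤ s*s*t := Nat.mul_le_mul_left _ (by omega)
    have r1 : s*s*2 = 2*(s*s) := by ring
    omega
  · exfalso
    rcases Nat.lt_or_ge t (m+1) with hc | hc
    · have hmul : s*s*t ≤ s*s*m := Nat.mul_le_mul_left _ (by omega)
      omega
    · have hmul : s*s*(m+1) ≤ s*s*t := Nat.mul_le_mul_left _ hc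
      have r1 : s*s*(m+1) = s*s*m + s*s := Nat.mul_succ _ _
      omega
  · -- int-odd vs int-even
    exfalso
    have ht : t = t' := by
      rcases e1 with e1' | e1' <;> rcases e2 with e2' | e2' <;>
        [exact int_eq s hs (Or.inl rfl) (Or.inl rfl) (by omega);
         exact int_eq s hs (Or.inl rfl) (Or.inr rfl) (by omega);
         exact int_eq s hs (Or.inr rfl) (Or.inl rfl) (by omega);
         exact int_eq s hs (Or.inr rfl) (Or.inr rfl) (by omega)]
    omega
  · -- int-odd vs int-odd
    have ht : t = t' := by
      rcases e1 with e1' | e1' <;> rcases e2 with e2' | e2' <;>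
        [exact int_eq s hs (Or.inl rfl) (Or.inl rfl) (by omega);
         exact int_eq s hs (Or.inl rfl) (Or.inr rfl) (by omega);
         exact int_eq s hs (Or.inr rfl) (Or.inl rfl) (by omega);
         exact int_eq s hs (Or.inr rfl) (Or.inr rfl) (by omega)]
    omega

end APX

namespace APX

lemma par_mul (s m : ℕ) : (s*(m%2)) % 2 = (s*m) % 2 := by
  conv_lhs => rw [Nat.mul_mod]
  conv_rhs => rw [Nat.mul_mod]
  rw [Nat.mod_mod_of_dvd m (dvd_refl 2)]

lemma CW_gt_2s (s m j : ℕ) (hs : 3 ≤ s) (hm : 1 ≤ m) (hj : j < 2*m+2) :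
    2*s < CW s m j := by
  have hq := sq_ge s hs
  have h2T := two_TT s
  have hee := ee_le s m
  have hTT := TT_ge s hs
  have hm1 : s*s*1 ≤ s*s*m := Nat.mul_le_mul_left _ hm
  have hs1 : s*s*1 = s*s := by ring
  have hμ : s*(m%2) ≤ s*1 := Nat.mul_le_mul_left _ (by omega)
  rcases CW_eval s m j hs hm hj with ⟨rfl, e1⟩ | ⟨rfl, e1⟩ | ⟨rfl, e1⟩ | ⟨rfl, e1⟩
    | ⟨t, ht1, ht2, hjt, e1⟩ | ⟨t, ht1, ht2, hjt, e1⟩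
  · omega
  · omega
  · omega
  · omega
  · have hmul : s*s*2 ≤ s*s*t := Nat.mul_le_mul_left _ ht1
    have r1 : s*s*2 = 2*(s*s) := by ring
    rcases e1 with e1 | e1 <;> omega
  · have hmul : s*s*2 ≤ s*s*t := Nat.mul_le_mul_left _ (by omega)
    have r1 : s*s*2 = 2*(s*s) := by ring
    rcases e1 with e1 | e1 <;> omega

lemma CW_even (s m j : ℕ) (hs : 3 ≤ s) (hm : 1 ≤ m) (hj : j < 2*m+2)
    (hj' : j ≠ 2*m+1) : CW s m j % 2 = 0 := by
  have h2T := two_TT s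
  have hee := ee_le s m
  have hTT := TT_ge s hs
  have hep := ee_parity s m
  have hpm := par_mul s m
  have hμ : s*(m%2) ≤ s*1 := Nat.mul_le_mul_left _ (by omega)
  rcases CW_eval s m j hs hm hj with ⟨rfl, e1⟩ | ⟨rfl, e1⟩ | ⟨rfl, e1⟩ | ⟨rfl, e1⟩
    | ⟨t, ht1, ht2, hjt, e1⟩ | ⟨t, ht1, ht2, hjt, e1⟩
  · omega
  · omega
  · omega
  · omega
  · rcases e1 with e1 | e1 <;> omega
  · rcases e1 with e1 | e1 <;> omega

lemma C6_gt_leaf (s m b i1 : ℕ) (hs : 3 ≤ s) (hm : 1 ≤ m) (hb : b ≤ 2*m-1)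
    (hi : i1 ≤ s) : 4*(s*(b+1)) + 4*i1 - 1 < CW s m (2*m+1) := by
  have hq := sq_ge s hs
  have hC6 : CW s m (2*m+1) = 4*(s*s*m) + s*s := by
    rcases CW_eval s m (2*m+1) hs hm (by omega) with ⟨h0, e1⟩ | ⟨h0, e1⟩ | ⟨h0, e1⟩
      | ⟨h0, e1⟩ | ⟨t, ht1, ht2, hjt, e1⟩ | ⟨t, ht1, ht2, hjt, e1⟩ <;> omega
  rw [hC6]
  have hmul : s*(b+1) ≤ s*(2*m) := Nat.mul_le_mul_left _ (by omega)
  have r1 : s*(2*m) = 2*(s*m) := by ring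
  have hsm : 3*s*m ≤ s*s*m := Nat.mul_le_mul_right m (by omega)
  have r2 : 3*s*m = 3*(s*m) := by ring
  have r3 : s*1 ≤ s*m := Nat.mul_le_mul_left _ hm
  have r4 : s*1 = s := by ring
  omega

lemma leaf_mid_val (s m i1 j : ℕ) (hs : 3 ≤ s) (hm : 1 ≤ m) (h1 : 1 ≤ j)
    (h2 : j ≤ 2*m) (hi : 1 ≤ i1) (hi2 : i1 ≤ s) :
    LW s m i1 j = 4*(s*(blk m j + 1)) + 4*i1 - 1
      ∧ blk m j ≤ 2*m-1 ∧ LW s m i1 j % 2 = 1 ∧ 2*s < LW s m i1 j := by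
  unfold LW
  rw [if_neg (by omega), if_neg (by omega)]
  have hb := blk_le m j hm h1 h2
  have hmul : s*1 ≤ s*(blk m j + 1) := Nat.mul_le_mul_left _ (by omega)
  have r4 : s*1 = s := by ring
  exact ⟨rfl, hb, by omega, by omega⟩

lemma LW_le_pendant (s m i1 j : ℕ) (hs : 3 ≤ s) (hi : 1 ≤ i1) (hi2 : i1 ≤ s)
    (hj : j = 0 ∨ j = 2*m+1) : 1 ≤ LW s m i1 j ∧ LW s m i1 j ≤ 2*s := by
  unfold LW
  rcases hj with rfl | rfl
  · rw [if_pos rfl]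
    exact ⟨bL_ge s m i1 hs hi, bL_le s m i1 hs hi2⟩
  · rw [if_neg (by omega), if_pos rfl]
    exact ⟨aL_ge s m i1 hs hi, aL_le s m i1 hs hi2⟩

lemma LW_0 (s m i1 : ℕ) : LW s m i1 0 = bL s m i1 := by
  unfold LW; rw [if_pos rfl]

lemma LW_top (s m i1 : ℕ) : LW s m i1 (2*m+1) = aL s m i1 := by
  unfold LW; rw [if_neg (by omega), if_pos rfl]

lemma LW_inj (s m i1 j i1' j' : ℕ) (hs : 3 ≤ s) (hm : 1 ≤ m)
    (h1 : 1 ≤ i1) (h2 : i1 ≤ s) (h1' : 1 ≤ i1') (h2' : i1' ≤ s)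
    (hj : j < 2*m+2) (hj' : j' < 2*m+2)
    (h : LW s m i1 j = LW s m i1' j') : i1 = i1' ∧ j = j' := by
  have hq := sq_ge s hs
  have hcl : ∀ jj : ℕ, jj < 2*m+2 → jj = 0 ∨ jj = 2*m+1 ∨ (1 ≤ jj ∧ jj ≤ 2*m) :=
    fun jj hjj => by omega
  rcases hcl j hj with rfl | rfl | hmid <;> rcases hcl j' hj' with rfl | rfl | hmid'
  · rw [LW_0, LW_0] at h
    exact ⟨bL_inj s m i1 i1' hs h1 h2 h1' h2' h, rfl⟩
  · rw [LW_0, LW_top] at h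
    exact absurd h.symm (aL_ne_bL s m i1' i1 hs h1' h2' h1 h2)
  · exfalso
    rw [LW_0] at h
    have hb := bL_le s m i1 hs h2
    have := (leaf_mid_val s m i1' j' hs hm hmid'.1 hmid'.2 h1' h2').2.2.2
    omega
  · rw [LW_0, LW_top] at h
    exact absurd h (aL_ne_bL s m i1 i1' hs h1 h2 h1' h2')
  · rw [LW_top, LW_top] at h
    exact ⟨aL_inj s m i1 i1' hs h1 h2 h1' h2' h, rfl⟩
  · exfalso
    rw [LW_top] at h
    have hb := aL_le s m i1 hs h2
    have := (leaf_mid_val s m i1' j' hs hm hmid'.1 hmid'.2 h1' h2').2.2.2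
    omega
  · exfalso
    rw [LW_0] at h
    have hb := bL_le s m i1' hs h2'
    have := (leaf_mid_val s m i1 j hs hm hmid.1 hmid.2 h1 h2).2.2.2
    omega
  · exfalso
    rw [LW_top] at h
    have hb := aL_le s m i1' hs h2'
    have := (leaf_mid_val s m i1 j hs hm hmid.1 hmid.2 h1 h2).2.2.2
    omega
  · obtain ⟨hv, hb, _, _⟩ := leaf_mid_val s m i1 j hs hm hmid.1 hmid.2 h1 h2
    obtain ⟨hv', hb', _, _⟩ := leaf_mid_val s m i1' j' hs hm hmid'.1 hmid'.2 h1' h2'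
    rw [hv, hv'] at h
    have hbb : blk m j = blk m j' := by
      rcases lt_trichotomy (blk m j) (blk m j') with hl | he | hl
      · exfalso
        have hmul : s*(blk m j + 1 + 1) ≤ s*(blk m j' + 1) :=
          Nat.mul_le_mul_left _ (by omega)
        have r1 : s*(blk m j + 1 + 1) = s*(blk m j + 1) + s := by ring
        omega
      · exact he
      · exfalso
        have hmul : s*(blk m j' + 1 + 1) ≤ s*(blk m j + 1) :=
          Nat.mul_le_mul_left _ (by omega)
        have r1 : s*(blk m j' + 1 + 1) = s*(blk m j' + 1) + s := by ring
        omega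
    have hjj := blk_inj m j j' hm (by omega) (by omega) (by omega) (by omega) hbb
    rw [hbb] at h
    exact ⟨by omega, hjj⟩

end APX

namespace APX

lemma CW_ne_LW (s m jc i1 jl : ℕ) (hs : 3 ≤ s) (hm : 1 ≤ m)
    (hjc : jc < 2*m+2) (hjl : jl < 2*m+2) (h1 : 1 ≤ i1) (h2 : i1 ≤ s) :
    CW s m jc ≠ LW s m i1 jl := by
  intro h
  have hcl : jl = 0 ∨ jl = 2*m+1 ∨ (1 ≤ jl ∧ jl ≤ 2*m) := by omega
  rcases hcl with rfl | rfl | hmid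
  · have := (LW_le_pendant s m i1 0 hs h1 h2 (Or.inl rfl)).2
    have := CW_gt_2s s m jc hs hm hjc
    omega
  · have := (LW_le_pendant s m i1 (2*m+1) hs h1 h2 (Or.inr rfl)).2
    have := CW_gt_2s s m jc hs hm hjc
    omega
  · obtain ⟨hv, hb, hodd, hgt⟩ := leaf_mid_val s m i1 jl hs hm hmid.1 hmid.2 h1 h2
    by_cases hc6 : jc = 2*m+1
    · subst hc6
      have := C6_gt_leaf s m (blk m jl) i1 hs hm hb h2
      omega
    · have := CW_even s m jc hs hm hjc hc6
      omega

lemma WV_inj (s m : ℕ) (hs : 3 ≤ s) (hm : 1 ≤ m) :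
    Function.Injective (WV s m) := by
  rintro ⟨x | i, j⟩ ⟨y | i', j'⟩ h
  · -- both centers
    have hj := j.2
    have hj' := j'.2
    have := CW_inj s m j.1 j'.1 hs hm (by omega) (by omega) h
    rw [Prod.ext_iff]
    exact ⟨by rw [Subsingleton.elim x y], Fin.ext this⟩
  · exact absurd h (CW_ne_LW s m j.1 (i'.1+1) j'.1 hs hm (by have := j.2; omega)
      (by have := j'.2; omega) (by omega) i'.2)
  · exact absurd h.symm (CW_ne_LW s m j'.1 (i.1+1) j.1 hs hm (by have := j'.2; omega)
      (by have := j.2; omega) (by omega) i.2)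
  · -- both leaves
    obtain ⟨hi, hj⟩ := LW_inj s m (i.1+1) j.1 (i'.1+1) j'.1 hs hm (by omega) i.2
      (by omega) i'.2 j.2 j'.2 h
    rw [Prod.ext_iff]
    exact ⟨by rw [Fin.ext (by omega : i.1 = i'.1)], Fin.ext hj⟩

lemma vertexSum_injective (s m : ℕ) (hs : 3 ≤ s) (hm : 1 ≤ m) :
    Function.Injective (vertexSum (GG s m) (fl s m)) := by
  have hval : ∀ v : Vt s m, vertexSum (GG s m) (fl s m) v = WV s m v := by
    rintro ⟨x | i, j⟩
    · exact vsum_center s m hs x j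
    · exact vsum_leaf s m hs hm i j
  intro v w h
  rw [hval v, hval w] at h
  exact WV_inj s m hs hm h

end APX


/-- For every `s ≥ 3` and `m ≥ 1`, the direct product `K_{1,s} × P_{2m+2}`
is antimagic. -/
theorem star_tensor_evenPath_antimagic (s m : ℕ) (hs : 3 ≤ s) (hm : 1 ≤ m) :
    IsAntimagic (tensorProd (_root_.starGraph s) (pathGraph (2 * m + 2))) := by
  show IsAntimagic (APX.GG s m)
  refine ⟨APX.fl s m, ?_, APX.vertexSum_injective s m hs hm⟩
  have hc := APX.card_edgeFinset s m
  rw [hc]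
  exact APX.fl_bijOn s m hs hm
end

section
/- For every s ≥ 2, the direct product K_{1,s} × P_5 is antimagic. -/
open SimpleGraph

namespace StarP5

/-- center coordinate of the t-th edge type -/
def cc : Fin 8 → Fin 5 := ![0, 2, 2, 4, 1, 1, 3, 3]
/-- leaf coordinate of the t-th edge type -/
def lc : Fin 8 → Fin 5 := ![1, 1, 3, 3, 0, 2, 2, 4]
/-- block coefficient of the t-th edge type -/
def bl : Fin 8 → ℕ := ![4, 0, 6, 5, 2, 7, 1, 3]
/-- table: tab i j = bl t + 1 if (cc t, lc t) = (i, j), else 0 -/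
def tab : Fin 5 → Fin 5 → ℕ :=
  ![![0,5,0,0,0], ![3,0,8,0,0], ![0,1,0,7,0], ![0,0,2,0,4], ![0,0,0,6,0]]

abbrev Vtx (s : ℕ) := (Fin 1 ⊕ Fin s) × Fin 5

def g (s : ℕ) : Vtx s → Vtx s → ℕ
  | (Sum.inl _, i), (Sum.inr k, j) => (tab i j - 1) * s + k + 1
  | (Sum.inr k, j), (Sum.inl _, i) => (tab i j - 1) * s + k + 1
  | _, _ => 0

lemma g_symm (s : ℕ) (x y : Vtx s) : g s x y = g s y x := by
  obtain ⟨a, i⟩ := x; obtain ⟨b, j⟩ := y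
  cases a <;> cases b <;> rfl

noncomputable def f (s : ℕ) : Sym2 (Vtx s) → ℕ := Sym2.lift ⟨g s, g_symm s⟩

def enum (s : ℕ) (t : Fin 8) (k : Fin s) : Sym2 (Vtx s) :=
  s((Sum.inl 0, cc t), (Sum.inr k, lc t))

lemma tab_cc_lc (t : Fin 8) : tab (cc t) (lc t) = bl t + 1 := by
  fin_cases t <;> rfl

lemma f_enum (s : ℕ) (t : Fin 8) (k : Fin s) :
    f s (enum s t k) = bl t * s + (k : ℕ) + 1 := by
  have : f s (enum s t k) = g s (Sum.inl 0, cc t) (Sum.inr k, lc t) :=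
    Sym2.lift_mk _ _ _
  rw [this]
  show (tab (cc t) (lc t) - 1) * s + (k : ℕ) + 1 = _
  rw [tab_cc_lc]; simp

lemma enum_inj (s : ℕ) : Function.Injective (fun p : Fin 8 × Fin s => enum s p.1 p.2) := by
  rintro ⟨t, k⟩ ⟨t', k'⟩ h
  simp only [enum, Sym2.eq_iff, Prod.mk.injEq] at h
  rcases h with ⟨⟨h1, h2⟩, h3, h4⟩ | ⟨⟨h1, _⟩, _⟩
  · have ht : t = t' := by
      have : ∀ a b : Fin 8, cc a = cc b → lc a = lc b → a = b := by decide
      exact this t t' h2 h4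
    have hk : k = k' := by injection h3
    simp [ht, hk]
  · exact absurd h1 (by simp)

lemma path_adj_cc_lc (t : Fin 8) : (pathGraph 5).Adj (cc t) (lc t) := by
  rw [pathGraph_adj]; fin_cases t <;> decide

lemma enum_mem (s : ℕ) (t : Fin 8) (k : Fin s) :
    enum s t k ∈ (tensorProd (_root_.starGraph s) (pathGraph 5)).edgeSet := by
  show (tensorProd (_root_.starGraph s) (pathGraph 5)).Adj (Sum.inl 0, cc t) (Sum.inr k, lc t)
  exact ⟨Or.inl ⟨rfl, rfl⟩, path_adj_cc_lc t⟩

lemma mem_edgeSet_iff (s : ℕ) (e : Sym2 (Vtx s)) :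
    e ∈ (tensorProd (_root_.starGraph s) (pathGraph 5)).edgeSet ↔ ∃ t k, e = enum s t k := by
  induction e using Sym2.ind with
  | _ x y =>
    obtain ⟨a, i⟩ := x
    obtain ⟨b, j⟩ := y
    constructor
    · intro h
      rw [SimpleGraph.mem_edgeSet] at h
      obtain ⟨hst, hp⟩ := h
      rw [pathGraph_adj] at hp
      cases a with
      | inl u =>
        cases b with
        | inl u' => simp [_root_.starGraph, completeBipartiteGraph] at hst
        | inr k =>
          have hu : u = 0 := Subsingleton.elim _ _
          subst hu
          fin_cases i <;> fin_cases j <;>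
            first
              | exact ⟨0, k, rfl⟩ | exact ⟨1, k, rfl⟩ | exact ⟨2, k, rfl⟩
              | exact ⟨3, k, rfl⟩ | exact ⟨4, k, rfl⟩ | exact ⟨5, k, rfl⟩
              | exact ⟨6, k, rfl⟩ | exact ⟨7, k, rfl⟩ | simp at hp
      | inr k =>
        cases b with
        | inr k' => simp [_root_.starGraph, completeBipartiteGraph] at hst
        | inl u =>
          have hu : u = 0 := Subsingleton.elim _ _
          subst hu
          rw [Sym2.eq_swap]
          fin_cases i <;> fin_cases j <;>
            first
              | exact ⟨0, k, rfl⟩ | exact ⟨1, k, rfl⟩ | exact ⟨2, k, rfl⟩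
              | exact ⟨3, k, rfl⟩ | exact ⟨4, k, rfl⟩ | exact ⟨5, k, rfl⟩
              | exact ⟨6, k, rfl⟩ | exact ⟨7, k, rfl⟩ | simp at hp
    · rintro ⟨t, k, he⟩
      rw [he]
      exact enum_mem s t k

lemma edgeFinset_eq (s : ℕ) [Fintype ((tensorProd (_root_.starGraph s) (pathGraph 5)).edgeSet)] :
    (tensorProd (_root_.starGraph s) (pathGraph 5)).edgeFinset =
      Finset.image (fun p : Fin 8 × Fin s => enum s p.1 p.2) Finset.univ := by
  ext e
  simp only [SimpleGraph.mem_edgeFinset, mem_edgeSet_iff, Finset.mem_image, Finset.mem_univ,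
    true_and, Prod.exists]
  constructor
  · rintro ⟨t, k, rfl⟩; exact ⟨t, k, rfl⟩
  · rintro ⟨t, k, rfl⟩; exact ⟨t, k, rfl⟩

lemma card_edgeFinset (s : ℕ)
    [Fintype ((tensorProd (_root_.starGraph s) (pathGraph 5)).edgeSet)] :
    (tensorProd (_root_.starGraph s) (pathGraph 5)).edgeFinset.card = 8 * s := by
  rw [edgeFinset_eq, Finset.card_image_of_injective _ (enum_inj s)]
  simp

/-- Gauss-type sum. -/
def u (s : ℕ) : ℕ := ∑ k : Fin s, ((k : ℕ) + 1)

lemma u_eq (s : ℕ) : 2 * u s = s * s + s := by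
  have h1 : u s = ∑ k ∈ Finset.range s, (k + 1) := by
    rw [u]; exact Fin.sum_univ_eq_sum_range (fun k => k + 1) s
  have h2 : ∑ k ∈ Finset.range (s + 1), k = ∑ k ∈ Finset.range s, (k + 1) := by
    rw [Finset.sum_range_succ' (fun k => k) s]; simp
  have h3 := Finset.sum_range_id_mul_two (s + 1)
  rw [h1, ← h2]
  have h4 : (s + 1) * ((s + 1) - 1) = s * s + s := by
    simp only [Nat.add_sub_cancel]; ring
  omega

lemma vertexSum_eq (s : ℕ) (v : Vtx s) :
    vertexSum (tensorProd (_root_.starGraph s) (pathGraph 5)) (f s) v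
      = ∑ p : Fin 8 × Fin s, if v ∈ enum s p.1 p.2 then bl p.1 * s + (p.2 : ℕ) + 1 else 0 := by
  unfold vertexSum
  rw [edgeFinset_eq, Finset.sum_image (fun a _ b _ h => enum_inj s h)]
  refine Finset.sum_congr rfl fun p _ => ?_
  by_cases h : v ∈ enum s p.1 p.2
  · rw [if_pos h, if_pos h, f_enum]
  · rw [if_neg h, if_neg h]

lemma vertexSum_center (s : ℕ) (i : Fin 5) :
    vertexSum (tensorProd (_root_.starGraph s) (pathGraph 5)) (f s) (Sum.inl 0, i)
      = ∑ t : Fin 8, if cc t = i then bl t * s * s + u s else 0 := by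
  rw [vertexSum_eq, Fintype.sum_prod_type]
  refine Finset.sum_congr rfl fun t _ => ?_
  have hmem : ∀ k : Fin s, (((Sum.inl 0, i) : Vtx s) ∈ enum s t k) ↔ cc t = i := by
    intro k
    simp [enum, Sym2.mem_iff, Prod.ext_iff, eq_comm]
  by_cases h : cc t = i
  · rw [if_pos h]
    have : ∀ k : Fin s, (if ((Sum.inl 0, i) : Vtx s) ∈ enum s t k then bl t * s + (k : ℕ) + 1 else 0)
        = bl t * s + (k : ℕ) + 1 := fun k => if_pos ((hmem k).mpr h)
    rw [Finset.sum_congr rfl fun k _ => this k]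
    rw [Finset.sum_add_distrib, Finset.sum_add_distrib, Finset.sum_const, Finset.card_univ]
    simp [u, Finset.sum_add_distrib, mul_comm]
    ring
  · rw [if_neg h]
    exact Finset.sum_eq_zero fun k _ => if_neg (fun hm => h ((hmem k).mp hm))

lemma vertexSum_leaf (s : ℕ) (k : Fin s) (j : Fin 5) :
    vertexSum (tensorProd (_root_.starGraph s) (pathGraph 5)) (f s) (Sum.inr k, j)
      = ∑ t : Fin 8, if lc t = j then bl t * s + (k : ℕ) + 1 else 0 := by
  rw [vertexSum_eq, Fintype.sum_prod_type]
  refine Finset.sum_congr rfl fun t _ => ?_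
  have hmem : ∀ k' : Fin s, (((Sum.inr k, j) : Vtx s) ∈ enum s t k') ↔ (k' = k ∧ lc t = j) := by
    intro k'
    simp [enum, Sym2.mem_iff, Prod.ext_iff, eq_comm, and_comm]
  by_cases h : lc t = j
  · rw [if_pos h]
    rw [Finset.sum_eq_single k]
    · exact if_pos ((hmem k).mpr ⟨rfl, h⟩)
    · intro k' _ hne
      exact if_neg (fun hm => hne ((hmem k').mp hm).1)
    · intro hk; exact absurd (Finset.mem_univ k) hk
  · rw [if_neg h]
    exact Finset.sum_eq_zero fun k' _ => if_neg (fun hm => h ((hmem k').mp hm).2)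

/-- closed form for center sums -/
def C (s : ℕ) (n : ℕ) : ℕ :=
  if n = 0 then 4*(s*s) + u s
  else if n = 1 then 9*(s*s) + 2 * u s
  else if n = 2 then 6*(s*s) + 2 * u s
  else if n = 3 then 4*(s*s) + 2 * u s
  else 5*(s*s) + u s

/-- closed form for leaf sums -/
def L (s k : ℕ) (n : ℕ) : ℕ :=
  if n = 0 then 2*s + k + 1
  else if n = 1 then 4*s + 2*k + 2
  else if n = 2 then 8*s + 2*k + 2
  else if n = 3 then 11*s + 2*k + 2
  else 3*s + k + 1

lemma centerVal (s : ℕ) (i : Fin 5) :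
    vertexSum (tensorProd (_root_.starGraph s) (pathGraph 5)) (f s) (Sum.inl 0, i) = C s i.val := by
  rw [vertexSum_center]
  fin_cases i <;>
    simp only [Fin.sum_univ_eight,
      show cc 0 = 0 from rfl, show cc 1 = 2 from rfl, show cc 2 = 2 from rfl,
      show cc 3 = 4 from rfl, show cc 4 = 1 from rfl, show cc 5 = 1 from rfl,
      show cc 6 = 3 from rfl, show cc 7 = 3 from rfl,
      show bl 0 = 4 from rfl, show bl 1 = 0 from rfl, show bl 2 = 6 from rfl,
      show bl 3 = 5 from rfl, show bl 4 = 2 from rfl, show bl 5 = 7 from rfl,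
      show bl 6 = 1 from rfl, show bl 7 = 3 from rfl] <;>
    simp [C] <;> ring

lemma leafVal (s : ℕ) (k : Fin s) (j : Fin 5) :
    vertexSum (tensorProd (_root_.starGraph s) (pathGraph 5)) (f s) (Sum.inr k, j) = L s k.val j.val := by
  rw [vertexSum_leaf]
  fin_cases j <;>
    simp only [Fin.sum_univ_eight,
      show lc 0 = 1 from rfl, show lc 1 = 1 from rfl, show lc 2 = 3 from rfl,
      show lc 3 = 3 from rfl, show lc 4 = 0 from rfl, show lc 5 = 2 from rfl,
      show lc 6 = 2 from rfl, show lc 7 = 4 from rfl,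
      show bl 0 = 4 from rfl, show bl 1 = 0 from rfl, show bl 2 = 6 from rfl,
      show bl 3 = 5 from rfl, show bl 4 = 2 from rfl, show bl 5 = 7 from rfl,
      show bl 6 = 1 from rfl, show bl 7 = 3 from rfl] <;>
    simp [L] <;> ring

end StarP5

/-- For every `s ≥ 2`, the direct product `K_{1,s} × P_5` is antimagic. -/
theorem star_tensor_P5_antimagic (s : ℕ) (hs : 2 ≤ s) :
    IsAntimagic (tensorProd (_root_.starGraph s) (pathGraph 5)) := by
  classical
  refine ⟨StarP5.f s, ⟨?_, ?_, ?_⟩, ?_⟩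
  · -- MapsTo
    intro e he
    rw [StarP5.mem_edgeSet_iff] at he
    obtain ⟨t, k, rfl⟩ := he
    rw [Set.mem_Icc, StarP5.f_enum, StarP5.card_edgeFinset]
    have h7 : StarP5.bl t ≤ 7 := by revert t; decide
    have hks := k.isLt
    have hm : StarP5.bl t * s ≤ 7 * s := Nat.mul_le_mul_right s h7
    omega
  · -- InjOn
    intro e he e' he' hf
    rw [StarP5.mem_edgeSet_iff] at he he'
    obtain ⟨t, k, rfl⟩ := he
    obtain ⟨t', k', rfl⟩ := he'
    rw [StarP5.f_enum, StarP5.f_enum] at hf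
    have hk := k.isLt; have hk' := k'.isLt
    have hbl : StarP5.bl t = StarP5.bl t' := by
      rcases Nat.lt_trichotomy (StarP5.bl t) (StarP5.bl t') with h | h | h
      · have h2 : (StarP5.bl t + 1) * s ≤ StarP5.bl t' * s := Nat.mul_le_mul_right s h
        have h3 : (StarP5.bl t + 1) * s = StarP5.bl t * s + s := by ring
        omega
      · exact h
      · have h2 : (StarP5.bl t' + 1) * s ≤ StarP5.bl t * s := Nat.mul_le_mul_right s h
        have h3 : (StarP5.bl t' + 1) * s = StarP5.bl t' * s + s := by ring
        omega
    have ht : t = t' := by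
      have hinj : ∀ a b : Fin 8, StarP5.bl a = StarP5.bl b → a = b := by decide
      exact hinj _ _ hbl
    subst ht
    have hkk : (k : ℕ) = (k' : ℕ) := by omega
    rw [Fin.ext hkk]
  · -- SurjOn
    intro n hn
    rw [StarP5.card_edgeFinset, Set.mem_Icc] at hn
    obtain ⟨h1, h2⟩ := hn
    have hs0 : 0 < s := by omega
    obtain ⟨m, r, hmr, hrs⟩ : ∃ m r, m * s + r = n - 1 ∧ r < s :=
      ⟨(n - 1) / s, (n - 1) % s, by rw [mul_comm]; exact Nat.div_add_mod _ _,
        Nat.mod_lt _ hs0⟩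
    have hm8 : m < 8 := by
      by_contra h
      push_neg at h
      have : 8 * s ≤ m * s := Nat.mul_le_mul_right s h
      omega
    obtain ⟨t, ht⟩ : ∃ t : Fin 8, StarP5.bl t = m := by
      have hall : ∀ m : Fin 8, ∃ t : Fin 8, StarP5.bl t = (m : ℕ) := by decide
      obtain ⟨t, ht⟩ := hall ⟨m, hm8⟩
      exact ⟨t, ht⟩
    refine ⟨StarP5.enum s t ⟨r, hrs⟩, StarP5.enum_mem s t _, ?_⟩
    rw [StarP5.f_enum, ht]
    show m * s + r + 1 = n
    omega
  · -- injectivity of vertex sums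
    intro v w hvw
    have hq2 : 2 * s ≤ s * s := Nat.mul_le_mul_right s hs
    have hu2 : 2 * StarP5.u s = s * s + s := StarP5.u_eq s
    have hbig : (s = 2 ∧ s * s = 4) ∨ 3 * s ≤ s * s := by
      rcases Nat.lt_or_ge s 3 with h | h
      · left
        have : s = 2 := by omega
        subst this; exact ⟨rfl, rfl⟩
      · right; exact Nat.mul_le_mul_right s h
    obtain ⟨a, i⟩ := v
    obtain ⟨b, j⟩ := w
    obtain ⟨iv, hi⟩ := i
    obtain ⟨jv, hj⟩ := j
    cases a with
    | inl x =>
      have hx : x = 0 := Subsingleton.elim _ _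
      subst hx
      cases b with
      | inl y =>
        have hy : y = 0 := Subsingleton.elim _ _
        subst hy
        rw [StarP5.centerVal, StarP5.centerVal] at hvw
        have : iv = jv := by
          obtain ⟨h1, h2⟩ | h3 := hbig <;>
            (interval_cases iv <;> interval_cases jv <;>
              simp [StarP5.C] at hvw ⊢ <;> omega)
        subst this; rfl
      | inr k =>
        exfalso
        obtain ⟨kv, hk⟩ := k
        rw [StarP5.centerVal, StarP5.leafVal] at hvw
        simp only [] at hvw
        obtain ⟨h1, h2⟩ | h3 := hbig <;>
          (interval_cases iv <;> interval_cases jv <;>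
            simp [StarP5.C, StarP5.L] at hvw <;> omega)
    | inr k =>
      obtain ⟨kv, hk⟩ := k
      cases b with
      | inl y =>
        exfalso
        have hy : y = 0 := Subsingleton.elim _ _
        subst hy
        rw [StarP5.leafVal, StarP5.centerVal] at hvw
        simp only [] at hvw
        obtain ⟨h1, h2⟩ | h3 := hbig <;>
          (interval_cases iv <;> interval_cases jv <;>
            simp [StarP5.C, StarP5.L] at hvw <;> omega)
      | inr k' =>
        obtain ⟨kv', hk'⟩ := k'
        rw [StarP5.leafVal, StarP5.leafVal] at hvw
        simp only [] at hvw
        have : kv = kv' ∧ iv = jv := by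
          obtain ⟨h1, h2⟩ | h3 := hbig <;>
            (interval_cases iv <;> interval_cases jv <;>
              simp [StarP5.L] at hvw ⊢ <;> omega)
        obtain ⟨rfl, rfl⟩ := this
        rfl
end

section
/- For n ≥ 4, the disjoint union of two copies of the path P_n is antimagic. -/
open SimpleGraph

namespace TwoPathsAux

/-- label of edge `i` (joining vertices `i, i+1`) of the left path, `i < m`. -/
def lab (m i : ℕ) : ℕ :=
  if m = 3 then (if i = 0 then 1 else if i = 1 then 5 else 2)
  else if m % 2 = 0 then i + 1
  else if i = m - 2 then m else if i = m - 1 then m - 1 else i + 1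

/-- label of edge `i` of the right path. -/
def rab (m i : ℕ) : ℕ :=
  if m = 3 then (if i = 0 then 3 else if i = 1 then 6 else 4)
  else if m % 2 = 0 then (if i = 0 then m + 2 else if i = 1 then m + 1 else m + i + 1)
  else m + i + 1

lemma lab_val3 {i : ℕ} (hi : i < 3) :
    (i = 0 ∧ lab 3 i = 1) ∨ (i = 1 ∧ lab 3 i = 5) ∨ (i = 2 ∧ lab 3 i = 2) := by
  interval_cases i <;> simp [lab]

lemma rab_val3 {i : ℕ} (hi : i < 3) :
    (i = 0 ∧ rab 3 i = 3) ∨ (i = 1 ∧ rab 3 i = 6) ∨ (i = 2 ∧ rab 3 i = 4) := by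
  interval_cases i <;> simp [rab]

lemma lab_valE {m i : ℕ} (h3 : m ≠ 3) (he : m % 2 = 0) (hi : i < m) :
    lab m i = i + 1 := by
  unfold lab; split_ifs <;> first | contradiction | omega

lemma rab_valE {m i : ℕ} (h3 : m ≠ 3) (he : m % 2 = 0) (hi : i < m) :
    (i = 0 ∧ rab m i = m + 2) ∨ (i = 1 ∧ rab m i = m + 1) ∨
      (2 ≤ i ∧ rab m i = m + i + 1) := by
  unfold rab; split_ifs <;> first | contradiction | omega

lemma lab_valO {m i : ℕ} (hm : 3 ≤ m) (h3 : m ≠ 3) (ho : m % 2 = 1) (hi : i < m) :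
    (i = m - 2 ∧ lab m i = m) ∨ (i = m - 1 ∧ lab m i = m - 1) ∨
      (i ≤ m - 3 ∧ lab m i = i + 1) := by
  unfold lab; split_ifs <;> first | contradiction | omega

lemma rab_valO {m i : ℕ} (h3 : m ≠ 3) (ho : m % 2 = 1) (hi : i < m) :
    rab m i = m + i + 1 := by
  unfold rab; split_ifs <;> first | contradiction | omega

attribute [irreducible] lab rab

lemma lab_mem {m i : ℕ} (hm : 3 ≤ m) (hi : i < m) : 1 ≤ lab m i ∧ lab m i ≤ 2 * m := by
  by_cases h3 : m = 3
  · subst h3; have := lab_val3 hi; omega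
  · rcases Nat.even_or_odd m with he | ho
    · have := lab_valE h3 (Nat.even_iff.mp he) hi; omega
    · have := lab_valO hm h3 (Nat.odd_iff.mp ho) hi; omega

lemma rab_mem {m i : ℕ} (hm : 3 ≤ m) (hi : i < m) : 1 ≤ rab m i ∧ rab m i ≤ 2 * m := by
  by_cases h3 : m = 3
  · subst h3; have := rab_val3 hi; omega
  · rcases Nat.even_or_odd m with he | ho
    · have := rab_valE h3 (Nat.even_iff.mp he) hi; omega
    · have := rab_valO h3 (Nat.odd_iff.mp ho) hi; omega

lemma lab_inj {m i j : ℕ} (hm : 3 ≤ m) (hi : i < m) (hj : j < m)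
    (h : lab m i = lab m j) : i = j := by
  by_cases h3 : m = 3
  · subst h3; have := lab_val3 hi; have := lab_val3 hj; omega
  · rcases Nat.even_or_odd m with he | ho
    · have := lab_valE h3 (Nat.even_iff.mp he) hi
      have := lab_valE h3 (Nat.even_iff.mp he) hj; omega
    · have := lab_valO hm h3 (Nat.odd_iff.mp ho) hi
      have := lab_valO hm h3 (Nat.odd_iff.mp ho) hj; omega

lemma rab_inj {m i j : ℕ} (hm : 3 ≤ m) (hi : i < m) (hj : j < m)
    (h : rab m i = rab m j) : i = j := by
  by_cases h3 : m = 3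
  · subst h3; have := rab_val3 hi; have := rab_val3 hj; omega
  · rcases Nat.even_or_odd m with he | ho
    · have := rab_valE h3 (Nat.even_iff.mp he) hi
      have := rab_valE h3 (Nat.even_iff.mp he) hj; omega
    · have := rab_valO h3 (Nat.odd_iff.mp ho) hi
      have := rab_valO h3 (Nat.odd_iff.mp ho) hj; omega

lemma lab_ne_rab {m i j : ℕ} (hm : 3 ≤ m) (hi : i < m) (hj : j < m) :
    lab m i ≠ rab m j := by
  by_cases h3 : m = 3
  · subst h3; have := lab_val3 hi; have := rab_val3 hj; omega
  · rcases Nat.even_or_odd m with he | ho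
    · have := lab_valE h3 (Nat.even_iff.mp he) hi
      have := rab_valE h3 (Nat.even_iff.mp he) hj; omega
    · have := lab_valO hm h3 (Nat.odd_iff.mp ho) hi
      have := rab_valO h3 (Nat.odd_iff.mp ho) hj; omega

lemma surj {m k : ℕ} (hm : 3 ≤ m) (hk1 : 1 ≤ k) (hk2 : k ≤ 2 * m) :
    (∃ i, i < m ∧ lab m i = k) ∨ (∃ i, i < m ∧ rab m i = k) := by
  by_cases h3 : m = 3
  · subst h3
    interval_cases k
    · exact Or.inl ⟨0, by norm_num, by have := lab_val3 (i := 0) (by norm_num); omega⟩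
    · exact Or.inl ⟨2, by norm_num, by have := lab_val3 (i := 2) (by norm_num); omega⟩
    · exact Or.inr ⟨0, by norm_num, by have := rab_val3 (i := 0) (by norm_num); omega⟩
    · exact Or.inr ⟨2, by norm_num, by have := rab_val3 (i := 2) (by norm_num); omega⟩
    · exact Or.inl ⟨1, by norm_num, by have := lab_val3 (i := 1) (by norm_num); omega⟩
    · exact Or.inr ⟨1, by norm_num, by have := rab_val3 (i := 1) (by norm_num); omega⟩
  · rcases Nat.even_or_odd m with he' | ho'
    · have he := Nat.even_iff.mp he'
      rcases le_or_gt k m with h | h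
      · refine Or.inl ⟨k - 1, by omega, ?_⟩
        have := lab_valE (i := k - 1) h3 he (by omega); omega
      · by_cases h1 : k = m + 1
        · refine Or.inr ⟨1, by omega, ?_⟩
          have := rab_valE (i := 1) h3 he (by omega); omega
        · by_cases h2 : k = m + 2
          · refine Or.inr ⟨0, by omega, ?_⟩
            have := rab_valE (i := 0) h3 he (by omega); omega
          · refine Or.inr ⟨k - m - 1, by omega, ?_⟩
            have := rab_valE (i := k - m - 1) h3 he (by omega); omega
    · have ho := Nat.odd_iff.mp ho'
      rcases le_or_gt k m with h | h
      · by_cases h1 : k = m - 1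
        · refine Or.inl ⟨m - 1, by omega, ?_⟩
          have := lab_valO (i := m - 1) hm h3 ho (by omega); omega
        · by_cases h2 : k = m
          · refine Or.inl ⟨m - 2, by omega, ?_⟩
            have := lab_valO (i := m - 2) hm h3 ho (by omega); omega
          · refine Or.inl ⟨k - 1, by omega, ?_⟩
            have := lab_valO (i := k - 1) hm h3 ho (by omega); omega
      · refine Or.inr ⟨k - m - 1, by omega, ?_⟩
        have := rab_valO (i := k - m - 1) h3 ho (by omega); omega

/-- vertex sum at vertex `v ≤ m` of the left path. -/
def sL (m v : ℕ) : ℕ :=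
  (if v = 0 then 0 else lab m (v - 1)) + (if v = m then 0 else lab m v)

def sR (m v : ℕ) : ℕ :=
  (if v = 0 then 0 else rab m (v - 1)) + (if v = m then 0 else rab m v)

lemma sL_cases (m v : ℕ) (hm : 3 ≤ m) :
    (v = 0 ∧ sL m v = lab m 0) ∨
    (v ≠ 0 ∧ v = m ∧ sL m v = lab m (v - 1)) ∨
    (v ≠ 0 ∧ v ≠ m ∧ sL m v = lab m (v - 1) + lab m v) := by
  unfold sL
  split_ifs with h1 h2 h2 <;> simp_all <;> omega

lemma sR_cases (m v : ℕ) (hm : 3 ≤ m) :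
    (v = 0 ∧ sR m v = rab m 0) ∨
    (v ≠ 0 ∧ v = m ∧ sR m v = rab m (v - 1)) ∨
    (v ≠ 0 ∧ v ≠ m ∧ sR m v = rab m (v - 1) + rab m v) := by
  unfold sR
  split_ifs with h1 h2 h2 <;> simp_all <;> omega

attribute [irreducible] sL sR

lemma sL_val3 {v : ℕ} (hv : v ≤ 3) :
    (v = 0 ∧ sL 3 v = 1) ∨ (v = 1 ∧ sL 3 v = 6) ∨ (v = 2 ∧ sL 3 v = 7) ∨
      (v = 3 ∧ sL 3 v = 2) := by
  rcases sL_cases 3 v (by norm_num) with ⟨h0, hc⟩ | ⟨h0, hvm, hc⟩ | ⟨h0, hvm, hc⟩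
  · have := lab_val3 (i := 0) (by norm_num); omega
  · have := lab_val3 (i := v - 1) (by omega); omega
  · have := lab_val3 (i := v - 1) (by omega)
    have := lab_val3 (i := v) (by omega); omega

lemma sR_val3 {v : ℕ} (hv : v ≤ 3) :
    (v = 0 ∧ sR 3 v = 3) ∨ (v = 1 ∧ sR 3 v = 9) ∨ (v = 2 ∧ sR 3 v = 10) ∨
      (v = 3 ∧ sR 3 v = 4) := by
  rcases sR_cases 3 v (by norm_num) with ⟨h0, hc⟩ | ⟨h0, hvm, hc⟩ | ⟨h0, hvm, hc⟩
  · have := rab_val3 (i := 0) (by norm_num); omega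
  · have := rab_val3 (i := v - 1) (by omega); omega
  · have := rab_val3 (i := v - 1) (by omega)
    have := rab_val3 (i := v) (by omega); omega

lemma sL_valE {m v : ℕ} (hm : 3 ≤ m) (h3 : m ≠ 3) (he : m % 2 = 0) (hv : v ≤ m) :
    (v = 0 ∧ sL m v = 1) ∨ (v = m ∧ sL m v = m) ∨
      (1 ≤ v ∧ v ≤ m - 1 ∧ sL m v = 2 * v + 1) := by
  rcases sL_cases m v hm with ⟨h0, hc⟩ | ⟨h0, hvm, hc⟩ | ⟨h0, hvm, hc⟩
  · have := lab_valE (i := 0) h3 he (by omega); omega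
  · have := lab_valE (i := v - 1) h3 he (by omega); omega
  · have := lab_valE (i := v - 1) h3 he (by omega)
    have := lab_valE (i := v) h3 he (by omega); omega

lemma sR_valE {m v : ℕ} (hm : 3 ≤ m) (h3 : m ≠ 3) (he : m % 2 = 0) (hv : v ≤ m) :
    (v = 0 ∧ sR m v = m + 2) ∨ (v = m ∧ sR m v = 2 * m) ∨
      (v = 1 ∧ sR m v = 2 * m + 3) ∨ (v = 2 ∧ sR m v = 2 * m + 4) ∨
      (3 ≤ v ∧ v ≤ m - 1 ∧ sR m v = 2 * m + 2 * v + 1) := by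
  rcases sR_cases m v hm with ⟨h0, hc⟩ | ⟨h0, hvm, hc⟩ | ⟨h0, hvm, hc⟩
  · have := rab_valE (i := 0) h3 he (by omega); omega
  · have := rab_valE (i := v - 1) h3 he (by omega); omega
  · have := rab_valE (i := v - 1) h3 he (by omega)
    have := rab_valE (i := v) h3 he (by omega); omega

lemma sL_valO {m v : ℕ} (hm : 3 ≤ m) (h3 : m ≠ 3) (ho : m % 2 = 1) (hv : v ≤ m) :
    (v = 0 ∧ sL m v = 1) ∨ (v = m ∧ sL m v = m - 1) ∨
      (v = m - 2 ∧ sL m v = 2 * m - 2) ∨ (v = m - 1 ∧ sL m v = 2 * m - 1) ∨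
      (1 ≤ v ∧ v ≤ m - 3 ∧ sL m v = 2 * v + 1) := by
  rcases sL_cases m v hm with ⟨h0, hc⟩ | ⟨h0, hvm, hc⟩ | ⟨h0, hvm, hc⟩
  · have := lab_valO (i := 0) hm h3 ho (by omega); omega
  · have := lab_valO (i := v - 1) hm h3 ho (by omega); omega
  · have := lab_valO (i := v - 1) hm h3 ho (by omega)
    have := lab_valO (i := v) hm h3 ho (by omega); omega

lemma sR_valO {m v : ℕ} (hm : 3 ≤ m) (h3 : m ≠ 3) (ho : m % 2 = 1) (hv : v ≤ m) :
    (v = 0 ∧ sR m v = m + 1) ∨ (v = m ∧ sR m v = 2 * m) ∨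
      (1 ≤ v ∧ v ≤ m - 1 ∧ sR m v = 2 * m + 2 * v + 1) := by
  rcases sR_cases m v hm with ⟨h0, hc⟩ | ⟨h0, hvm, hc⟩ | ⟨h0, hvm, hc⟩
  · have := rab_valO (i := 0) h3 ho (by omega); omega
  · have := rab_valO (i := v - 1) h3 ho (by omega); omega
  · have := rab_valO (i := v - 1) h3 ho (by omega)
    have := rab_valO (i := v) h3 ho (by omega); omega

lemma sL_inj {m v w : ℕ} (hm : 3 ≤ m) (hv : v ≤ m) (hw : w ≤ m)
    (h : sL m v = sL m w) : v = w := by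
  by_cases h3 : m = 3
  · subst h3; have := sL_val3 hv; have := sL_val3 hw; omega
  · rcases Nat.even_or_odd m with he | ho
    · have he' := Nat.even_iff.mp he
      have := sL_valE hm h3 he' hv
      have := sL_valE hm h3 he' hw; omega
    · have ho' := Nat.odd_iff.mp ho
      have := sL_valO hm h3 ho' hv
      have := sL_valO hm h3 ho' hw; omega

lemma sR_inj {m v w : ℕ} (hm : 3 ≤ m) (hv : v ≤ m) (hw : w ≤ m)
    (h : sR m v = sR m w) : v = w := by
  by_cases h3 : m = 3
  · subst h3; have := sR_val3 hv; have := sR_val3 hw; omega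
  · rcases Nat.even_or_odd m with he | ho
    · have he' := Nat.even_iff.mp he
      have := sR_valE hm h3 he' hv
      have := sR_valE hm h3 he' hw; omega
    · have ho' := Nat.odd_iff.mp ho
      have := sR_valO hm h3 ho' hv
      have := sR_valO hm h3 ho' hw; omega

lemma sL_ne_sR {m v w : ℕ} (hm : 3 ≤ m) (hv : v ≤ m) (hw : w ≤ m) :
    sL m v ≠ sR m w := by
  by_cases h3 : m = 3
  · subst h3; have := sL_val3 hv; have := sR_val3 hw; omega
  · rcases Nat.even_or_odd m with he | ho
    · have he' := Nat.even_iff.mp he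
      have := sL_valE hm h3 he' hv
      have := sR_valE hm h3 he' hw; omega
    · have ho' := Nat.odd_iff.mp ho
      have := sL_valO hm h3 ho' hv
      have := sR_valO hm h3 ho' hw; omega



/-- the labeling as a function of two vertices. -/
def gfun (n : ℕ) : (Fin n ⊕ Fin n) → (Fin n ⊕ Fin n) → ℕ
  | Sum.inl a, Sum.inl b =>
      if (a : ℕ) + 1 = b then lab (n-1) a else if (b : ℕ) + 1 = a then lab (n-1) b else 0
  | Sum.inr a, Sum.inr b =>
      if (a : ℕ) + 1 = b then rab (n-1) a else if (b : ℕ) + 1 = a then rab (n-1) b else 0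
  | _, _ => 0

lemma gfun_symm (n : ℕ) : ∀ u v, gfun n u v = gfun n v u := by
  rintro (a | a) (b | b) <;> simp only [gfun] <;> split_ifs <;> first | rfl | omega

/-- The edge labeling. -/
noncomputable def F (n : ℕ) : Sym2 (Fin n ⊕ Fin n) → ℕ := Sym2.lift ⟨gfun n, gfun_symm n⟩

variable {n : ℕ}

lemma F_ll (a b : Fin n) (h : (a : ℕ) + 1 = b) :
    F n s(Sum.inl a, Sum.inl b) = lab (n-1) a := by
  simp [F, gfun, h]

lemma F_rr (a b : Fin n) (h : (a : ℕ) + 1 = b) :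
    F n s(Sum.inr a, Sum.inr b) = rab (n-1) a := by
  simp [F, gfun, h]

/-- left edge `i`. -/
def eL (n i : ℕ) (h : i < n - 1) : Sym2 (Fin n ⊕ Fin n) :=
  s(Sum.inl ⟨i, by omega⟩, Sum.inl ⟨i + 1, by omega⟩)

def eR (n i : ℕ) (h : i < n - 1) : Sym2 (Fin n ⊕ Fin n) :=
  s(Sum.inr ⟨i, by omega⟩, Sum.inr ⟨i + 1, by omega⟩)

lemma F_eL {i : ℕ} (h : i < n - 1) : F n (eL n i h) = lab (n-1) i :=
  F_ll _ _ rfl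

lemma F_eR {i : ℕ} (h : i < n - 1) : F n (eR n i h) = rab (n-1) i :=
  F_rr _ _ rfl

lemma eL_mem {i : ℕ} (h : i < n - 1) : eL n i h ∈ (pathGraph n ⊕g pathGraph n).edgeSet := by
  rw [eL, mem_edgeSet]
  exact (show (pathGraph n).Adj _ _ by rw [pathGraph_adj]; exact Or.inl rfl)

lemma eR_mem {i : ℕ} (h : i < n - 1) : eR n i h ∈ (pathGraph n ⊕g pathGraph n).edgeSet := by
  rw [eR, mem_edgeSet]
  exact (show (pathGraph n).Adj _ _ by rw [pathGraph_adj]; exact Or.inl rfl)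

lemma edge_form {e : Sym2 (Fin n ⊕ Fin n)} (he : e ∈ (pathGraph n ⊕g pathGraph n).edgeSet) :
    ∃ i, ∃ h : i < n - 1, e = eL n i h ∨ e = eR n i h := by
  induction e using Sym2.ind with
  | _ u v =>
    rw [mem_edgeSet] at he
    obtain x | x := u <;> obtain y | y := v
    · replace he : (pathGraph n).Adj x y := he
      rw [pathGraph_adj] at he
      rcases he with h | h
      · refine ⟨x, by omega, Or.inl ?_⟩
        rw [eL, Sym2.eq_iff]
        exact Or.inl ⟨congrArg Sum.inl (Fin.ext rfl), congrArg Sum.inl (Fin.ext h.symm)⟩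
      · refine ⟨y, by omega, Or.inl ?_⟩
        rw [eL, Sym2.eq_iff]
        exact Or.inr ⟨congrArg Sum.inl (Fin.ext h.symm), congrArg Sum.inl (Fin.ext rfl)⟩
    · simp [SimpleGraph.sum_adj] at he
    · simp [SimpleGraph.sum_adj] at he
    · replace he : (pathGraph n).Adj x y := he
      rw [pathGraph_adj] at he
      rcases he with h | h
      · refine ⟨x, by omega, Or.inr ?_⟩
        rw [eR, Sym2.eq_iff]
        exact Or.inl ⟨congrArg Sum.inr (Fin.ext rfl), congrArg Sum.inr (Fin.ext h.symm)⟩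
      · refine ⟨y, by omega, Or.inr ?_⟩
        rw [eR, Sym2.eq_iff]
        exact Or.inr ⟨congrArg Sum.inr (Fin.ext h.symm), congrArg Sum.inr (Fin.ext rfl)⟩

lemma eL_inj {i j : ℕ} (hi : i < n - 1) (hj : j < n - 1) (h : eL n i hi = eL n j hj) :
    i = j := by
  rw [eL, eL, Sym2.eq_iff] at h
  rcases h with ⟨h1, h2⟩ | ⟨h1, h2⟩ <;>
    simp only [Sum.inl.injEq, Fin.mk.injEq] at h1 h2 <;> omega

lemma eR_inj {i j : ℕ} (hi : i < n - 1) (hj : j < n - 1) (h : eR n i hi = eR n j hj) :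
    i = j := by
  rw [eR, eR, Sym2.eq_iff] at h
  rcases h with ⟨h1, h2⟩ | ⟨h1, h2⟩ <;>
    simp only [Sum.inr.injEq, Fin.mk.injEq] at h1 h2 <;> omega

lemma eL_ne_eR {i j : ℕ} (hi : i < n - 1) (hj : j < n - 1) : eL n i hi ≠ eR n j hj := by
  rw [eL, eR]
  intro h
  rw [Sym2.eq_iff] at h
  rcases h with ⟨h1, h2⟩ | ⟨h1, h2⟩ <;> exact Sum.inl_ne_inr h1

lemma hbij (hn : 4 ≤ n) :
    Set.BijOn (F n) (pathGraph n ⊕g pathGraph n).edgeSet (Set.Icc 1 (2 * (n - 1))) := by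
  have hm : 3 ≤ n - 1 := by omega
  refine ⟨?_, ?_, ?_⟩
  · intro e he
    obtain ⟨i, h, rfl | rfl⟩ := edge_form he
    · rw [F_eL]
      have := lab_mem hm h
      exact Set.mem_Icc.mpr (by omega)
    · rw [F_eR]
      have := rab_mem hm h
      exact Set.mem_Icc.mpr (by omega)
  · intro e1 he1 e2 he2 hF
    obtain ⟨i, h, rfl | rfl⟩ := edge_form he1 <;> obtain ⟨j, h', rfl | rfl⟩ := edge_form he2
    · rw [F_eL, F_eL] at hF
      have := lab_inj hm h h' hF
      subst this; rfl
    · rw [F_eL, F_eR] at hF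
      exact absurd hF (lab_ne_rab hm h h')
    · rw [F_eR, F_eL] at hF
      exact absurd hF.symm (lab_ne_rab hm h' h)
    · rw [F_eR, F_eR] at hF
      have := rab_inj hm h h' hF
      subst this; rfl
  · intro k hk
    rw [Set.mem_Icc] at hk
    rcases surj hm hk.1 hk.2 with ⟨i, hi, hik⟩ | ⟨i, hi, hik⟩
    · exact ⟨eL n i hi, eL_mem hi, by rw [F_eL, hik]⟩
    · exact ⟨eR n i hi, eR_mem hi, by rw [F_eR, hik]⟩

lemma mem_eL_inl {a : Fin n} {i : ℕ} {h : i < n - 1} :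
    Sum.inl a ∈ eL n i h ↔ ((a : ℕ) = i ∨ (a : ℕ) = i + 1) := by
  simp [eL, Sym2.mem_iff, Fin.ext_iff]

lemma mem_eR_inr {a : Fin n} {i : ℕ} {h : i < n - 1} :
    Sum.inr a ∈ eR n i h ↔ ((a : ℕ) = i ∨ (a : ℕ) = i + 1) := by
  simp [eR, Sym2.mem_iff, Fin.ext_iff]

lemma not_mem_eR_inl {a : Fin n} {i : ℕ} {h : i < n - 1} : Sum.inl a ∉ eR n i h := by
  simp [eR, Sym2.mem_iff]

lemma not_mem_eL_inr {a : Fin n} {i : ℕ} {h : i < n - 1} : Sum.inr a ∉ eL n i h := by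
  simp [eL, Sym2.mem_iff]

lemma vsum_inl (hn : 4 ≤ n) (a : Fin n) :
    vertexSum (pathGraph n ⊕g pathGraph n) (F n) (Sum.inl a) = sL (n - 1) (a : ℕ) := by
  classical
  have hm : 3 ≤ n - 1 := by omega
  have ha : (a : ℕ) ≤ n - 1 := by omega
  have hsc := sL_cases (n - 1) (a : ℕ) hm
  unfold vertexSum
  rcases Nat.eq_zero_or_pos (a : ℕ) with h0 | h0
  · -- T = {eL n 0}
    rw [← Finset.sum_subset (Finset.singleton_subset_iff.mpr
        (mem_edgeFinset.mpr (eL_mem (show 0 < n - 1 by omega))))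
        (fun e hes heT => ?_), Finset.sum_singleton,
        if_pos (mem_eL_inl.mpr (Or.inl h0)), F_eL]
    · omega
    · rw [Finset.mem_singleton] at heT
      rw [if_neg]
      obtain ⟨j, hj, rfl | rfl⟩ := edge_form (mem_edgeFinset.mp hes)
      · rw [mem_eL_inl]
        rintro (hc | hc)
        · exact heT (by congr 1; omega)
        · omega
      · exact not_mem_eR_inl
  · rcases eq_or_ne (a : ℕ) (n - 1) with hlast | hlast
    · -- T = {eL n (n-2)}
      rw [← Finset.sum_subset (Finset.singleton_subset_iff.mpr
          (mem_edgeFinset.mpr (eL_mem (show (a : ℕ) - 1 < n - 1 by omega))))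
          (fun e hes heT => ?_), Finset.sum_singleton,
          if_pos (mem_eL_inl.mpr (Or.inr (by omega))), F_eL]
      · omega
      · rw [Finset.mem_singleton] at heT
        rw [if_neg]
        obtain ⟨j, hj, rfl | rfl⟩ := edge_form (mem_edgeFinset.mp hes)
        · rw [mem_eL_inl]
          rintro (hc | hc)
          · omega
          · exact heT (by congr 1; omega)
        · exact not_mem_eR_inl
    · -- T = pair
      have h1 : (a : ℕ) - 1 < n - 1 := by omega
      have h2 : (a : ℕ) < n - 1 := by omega
      have hne : eL n ((a : ℕ) - 1) h1 ≠ eL n (a : ℕ) h2 := by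
        intro hc; have := eL_inj h1 h2 hc; omega
      have hsub : ({eL n ((a : ℕ) - 1) h1, eL n (a : ℕ) h2} : Finset _) ⊆
          (pathGraph n ⊕g pathGraph n).edgeFinset := by
        intro e hee
        rcases Finset.mem_insert.mp hee with rfl | hee
        · exact mem_edgeFinset.mpr (eL_mem h1)
        · rw [Finset.mem_singleton] at hee; subst hee
          exact mem_edgeFinset.mpr (eL_mem h2)
      rw [← Finset.sum_subset hsub (fun e hes heT => ?_), Finset.sum_pair hne,
          if_pos (mem_eL_inl.mpr (Or.inr (by omega))),
          if_pos (mem_eL_inl.mpr (Or.inl rfl)), F_eL, F_eL]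
      · omega
      · rw [if_neg]
        obtain ⟨j, hj, rfl | rfl⟩ := edge_form (mem_edgeFinset.mp hes)
        · rw [mem_eL_inl]
          rintro (hc | hc)
          · exact heT (Finset.mem_insert.mpr (Or.inr (Finset.mem_singleton.mpr
              (by congr 1; omega))))
          · exact heT (Finset.mem_insert.mpr (Or.inl (by congr 1; omega)))
        · exact not_mem_eR_inl

lemma vsum_inr (hn : 4 ≤ n) (a : Fin n) :
    vertexSum (pathGraph n ⊕g pathGraph n) (F n) (Sum.inr a) = sR (n - 1) (a : ℕ) := by
  classical
  have hm : 3 ≤ n - 1 := by omega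
  have ha : (a : ℕ) ≤ n - 1 := by omega
  have hsc := sR_cases (n - 1) (a : ℕ) hm
  unfold vertexSum
  rcases Nat.eq_zero_or_pos (a : ℕ) with h0 | h0
  · -- T = {eR n 0}
    rw [← Finset.sum_subset (Finset.singleton_subset_iff.mpr
        (mem_edgeFinset.mpr (eR_mem (show 0 < n - 1 by omega))))
        (fun e hes heT => ?_), Finset.sum_singleton,
        if_pos (mem_eR_inr.mpr (Or.inl h0)), F_eR]
    · omega
    · rw [Finset.mem_singleton] at heT
      rw [if_neg]
      obtain ⟨j, hj, rfl | rfl⟩ := edge_form (mem_edgeFinset.mp hes)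
      · exact not_mem_eL_inr
      · rw [mem_eR_inr]
        rintro (hc | hc)
        · exact heT (by congr 1; omega)
        · omega
  · rcases eq_or_ne (a : ℕ) (n - 1) with hlast | hlast
    · -- T = {eR n (n-2)}
      rw [← Finset.sum_subset (Finset.singleton_subset_iff.mpr
          (mem_edgeFinset.mpr (eR_mem (show (a : ℕ) - 1 < n - 1 by omega))))
          (fun e hes heT => ?_), Finset.sum_singleton,
          if_pos (mem_eR_inr.mpr (Or.inr (by omega))), F_eR]
      · omega
      · rw [Finset.mem_singleton] at heT
        rw [if_neg]
        obtain ⟨j, hj, rfl | rfl⟩ := edge_form (mem_edgeFinset.mp hes)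
        · exact not_mem_eL_inr
        · rw [mem_eR_inr]
          rintro (hc | hc)
          · omega
          · exact heT (by congr 1; omega)
    · -- T = pair
      have h1 : (a : ℕ) - 1 < n - 1 := by omega
      have h2 : (a : ℕ) < n - 1 := by omega
      have hne : eR n ((a : ℕ) - 1) h1 ≠ eR n (a : ℕ) h2 := by
        intro hc; have := eR_inj h1 h2 hc; omega
      have hsub : ({eR n ((a : ℕ) - 1) h1, eR n (a : ℕ) h2} : Finset _) ⊆
          (pathGraph n ⊕g pathGraph n).edgeFinset := by
        intro e hee
        rcases Finset.mem_insert.mp hee with rfl | hee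
        · exact mem_edgeFinset.mpr (eR_mem h1)
        · rw [Finset.mem_singleton] at hee; subst hee
          exact mem_edgeFinset.mpr (eR_mem h2)
      rw [← Finset.sum_subset hsub (fun e hes heT => ?_), Finset.sum_pair hne,
          if_pos (mem_eR_inr.mpr (Or.inr (by omega))),
          if_pos (mem_eR_inr.mpr (Or.inl rfl)), F_eR, F_eR]
      · omega
      · rw [if_neg]
        obtain ⟨j, hj, rfl | rfl⟩ := edge_form (mem_edgeFinset.mp hes)
        · exact not_mem_eL_inr
        · rw [mem_eR_inr]
          rintro (hc | hc)
          · exact heT (Finset.mem_insert.mpr (Or.inr (Finset.mem_singleton.mpr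
              (by congr 1; omega))))
          · exact heT (Finset.mem_insert.mpr (Or.inl (by congr 1; omega)))

theorem two_paths_antimagic' (n : ℕ) (hn : 4 ≤ n) :
    IsAntimagic (pathGraph n ⊕g pathGraph n) := by
  classical
  have hm : 3 ≤ n - 1 := by omega
  have hb := hbij hn
  refine ⟨F n, ?_, ?_⟩
  · have hncard : (pathGraph n ⊕g pathGraph n).edgeSet.ncard = 2 * (n - 1) := by
      have h1 := Set.ncard_image_of_injOn hb.injOn
      rw [hb.image_eq, ← Finset.coe_Icc, Set.ncard_coe_finset, Nat.card_Icc] at h1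
      omega
    have hcard : (pathGraph n ⊕g pathGraph n).edgeFinset.card = 2 * (n - 1) := by
      rw [← Set.ncard_coe_finset, coe_edgeFinset, hncard]
    rw [hcard]
    exact hb
  · intro u v h
    match u, v with
    | Sum.inl a, Sum.inl b =>
      rw [vsum_inl hn, vsum_inl hn] at h
      exact congrArg Sum.inl (Fin.ext (sL_inj hm (by omega) (by omega) h))
    | Sum.inl a, Sum.inr b =>
      rw [vsum_inl hn, vsum_inr hn] at h
      exact absurd h (sL_ne_sR hm (by omega) (by omega))
    | Sum.inr a, Sum.inl b =>
      rw [vsum_inr hn, vsum_inl hn] at h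
      exact absurd h.symm (sL_ne_sR hm (by omega) (by omega))
    | Sum.inr a, Sum.inr b =>
      rw [vsum_inr hn, vsum_inr hn] at h
      exact congrArg Sum.inr (Fin.ext (sR_inj hm (by omega) (by omega) h))

end TwoPathsAux

/-- For `n ≥ 4`, the disjoint union of two copies of the path `P_n` is antimagic. -/
theorem two_paths_antimagic (n : ℕ) (hn : 4 ≤ n) :
    IsAntimagic (pathGraph n ⊕g pathGraph n) :=
  TwoPathsAux.two_paths_antimagic' n hn
end

section
/- In the edge labeling f_ε of K_{1,s} × P_{2m+2} (s ≥ 3, m ≥ 1) defined by labeling pendant edges with {1,...,2s} so that the labels at v_0 sum to s(s+1)/2 + ε, and f_ε(v_{i-1}a_i^j) = 2j−1+2is (i odd), = 2j+2is (i even), f_ε(a_i^j v_i) = 2j+2is (i odd), = 2j−1+2is (i even), f_ε(u_{i-1}b_i^j) = 2j−1+2is+2ms (i odd), = 2j+2is+2ms (i even), f_ε(b_i^j u_i) = 2j+2is+2ms (i odd), = 2j−1+2is+2ms (i even), the degree-2 vertex weights are wt(a_i^j) = 4j+4is−1 and wt(b_i^j) = 4ms+4j+4is−1, hence all degree-2 vertex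 weights are pairwise distinct and congruent to 3 modulo 4. -/
open SimpleGraph

/-- Vertices of `K_{1,s} × P_{2m+2}`: `a_i^j, b_i^j, v_i, u_i` for
`0 ≤ i ≤ m`, `1 ≤ j ≤ s` (here `j : Fin s` codes the value `j+1`). -/
inductive V16 (s m : ℕ) where
  | a (i : Fin (m + 1)) (j : Fin s)
  | b (i : Fin (m + 1)) (j : Fin s)
  | v (i : Fin (m + 1))
  | u (i : Fin (m + 1))
  deriving DecidableEq, Fintype

/-- The graph `K_{1,s} × P_{2m+2}` with edges `a_i^j v_i`, `b_i^j u_i`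
(`0 ≤ i ≤ m`) and `a_i^j v_{i-1}`, `b_i^j u_{i-1}` (`1 ≤ i ≤ m`). -/
def G16 (s m : ℕ) : SimpleGraph (V16 s m) :=
  SimpleGraph.fromRel (fun x y =>
    match x, y with
    | .a i _, .v k => k = i ∨ i.1 = k.1 + 1
    | .b i _, .u k => k = i ∨ i.1 = k.1 + 1
    | _, _ => False)

/-- The set of degree-2 vertices `a_i^j`, `b_i^j` with `1 ≤ i ≤ m`. -/
def degTwo (s m : ℕ) : Set (V16 s m) :=
  {x | ∃ (i : Fin (m + 1)) (j : Fin s),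
    1 ≤ i.1 ∧ (x = V16.a i j ∨ x = V16.b i j)}

lemma incident_a {s m : ℕ} (i : ℕ) (h1 : 1 ≤ i) (h2 : i ≤ m) (j : Fin s) (e : Sym2 (V16 s m)) :
    (e ∈ (G16 s m).edgeSet ∧ V16.a ⟨i, by omega⟩ j ∈ e) ↔
      e = s(V16.a ⟨i, by omega⟩ j, V16.v ⟨i, by omega⟩) ∨
      e = s(V16.a ⟨i, by omega⟩ j, V16.v ⟨i - 1, by omega⟩) := by
  induction e using Sym2.ind with
  | _ x y =>
    simp only [SimpleGraph.mem_edgeSet, G16, SimpleGraph.fromRel_adj, Sym2.mem_iff,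
      Sym2.eq, Sym2.rel_iff', Prod.mk.injEq, Prod.swap_prod_mk]
    constructor
    · rintro ⟨⟨hne, h⟩, hx | hy⟩
      · subst hx
        rcases y with ⟨yi,yj⟩|⟨yi,yj⟩|yi|yi <;> simp_all
        rcases h with h|h
        · exact Or.inl h
        · exact Or.inr (by simp only [Fin.ext_iff]; omega)
      · subst hy
        rcases x with ⟨xi,xj⟩|⟨xi,xj⟩|xi|xi <;> simp_all
        rcases h with h|h
        · exact Or.inl h
        · exact Or.inr (by simp only [Fin.ext_iff]; omega)
    · rintro (h|h) <;> rcases h with ⟨h1,h2⟩|⟨h1,h2⟩ <;> subst h1 <;> subst h2 <;>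
        refine ⟨⟨by simp, ?_⟩, by simp⟩
      · exact Or.inl (by simp)
      · exact Or.inr (by simp)
      · exact Or.inl (by simp; omega)
      · exact Or.inr (by simp; omega)

lemma incident_b {s m : ℕ} (i : ℕ) (h1 : 1 ≤ i) (h2 : i ≤ m) (j : Fin s) (e : Sym2 (V16 s m)) :
    (e ∈ (G16 s m).edgeSet ∧ V16.b ⟨i, by omega⟩ j ∈ e) ↔
      e = s(V16.b ⟨i, by omega⟩ j, V16.u ⟨i, by omega⟩) ∨
      e = s(V16.b ⟨i, by omega⟩ j, V16.u ⟨i - 1, by omega⟩) := by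
  induction e using Sym2.ind with
  | _ x y =>
    simp only [SimpleGraph.mem_edgeSet, G16, SimpleGraph.fromRel_adj, Sym2.mem_iff,
      Sym2.eq, Sym2.rel_iff', Prod.mk.injEq, Prod.swap_prod_mk]
    constructor
    · rintro ⟨⟨hne, h⟩, hx | hy⟩
      · subst hx
        rcases y with ⟨yi,yj⟩|⟨yi,yj⟩|yi|yi <;> simp_all
        rcases h with h|h
        · exact Or.inl h
        · exact Or.inr (by simp only [Fin.ext_iff]; omega)
      · subst hy
        rcases x with ⟨xi,xj⟩|⟨xi,xj⟩|xi|xi <;> simp_all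
        rcases h with h|h
        · exact Or.inl h
        · exact Or.inr (by simp only [Fin.ext_iff]; omega)
    · rintro (h|h) <;> rcases h with ⟨h1,h2⟩|⟨h1,h2⟩ <;> subst h1 <;> subst h2 <;>
        refine ⟨⟨by simp, ?_⟩, by simp⟩
      · exact Or.inl (by simp)
      · exact Or.inr (by simp)
      · exact Or.inl (by simp; omega)
      · exact Or.inr (by simp; omega)

open scoped Classical in
lemma vsum_pair {V : Type*} [Fintype V] (G : SimpleGraph V) (f : Sym2 V → ℕ) (w : V)
    (e1 e2 : Sym2 V) (hne : e1 ≠ e2)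
    (h : ∀ e, (e ∈ G.edgeSet ∧ w ∈ e) ↔ (e = e1 ∨ e = e2)) :
    vertexSum G f w = f e1 + f e2 := by
  classical
  rw [vertexSum, ← Finset.sum_filter]
  have : (G.edgeFinset.filter (fun e => w ∈ e)) = {e1, e2} := by
    ext e
    simp only [Finset.mem_filter, SimpleGraph.mem_edgeFinset, Finset.mem_insert,
      Finset.mem_singleton]
    exact h e
  rw [this, Finset.sum_pair hne]

example {s m : ℕ} (f : Sym2 (V16 s m) → ℕ) (i : ℕ) (h1 : 1 ≤ i) (h2 : i ≤ m) (j : Fin s) :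
    vertexSum (G16 s m) f (V16.a ⟨i, by omega⟩ j) =
      f s(V16.a ⟨i, by omega⟩ j, V16.v ⟨i, by omega⟩) +
      f s(V16.a ⟨i, by omega⟩ j, V16.v ⟨i - 1, by omega⟩) := by
  refine vsum_pair _ _ _ _ _ ?_ (incident_a i h1 h2 j)
  intro hc
  simp only [Sym2.eq, Sym2.rel_iff', Prod.mk.injEq, Prod.swap_prod_mk, V16.v.injEq,
    Fin.mk.injEq, reduceCtorEq, and_false, false_and, or_false, V16.a.injEq, and_true] at hc
  omega

lemma key_inj {s : ℕ} (hs : 0 < s) {i i' j j' : ℕ} (hj : j < s) (hj' : j' < s)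
    (h : j + i * s = j' + i' * s) : j = j' ∧ i = i' := by
  constructor
  · have := congrArg (· % s) h
    simpa [Nat.add_mul_mod_self_right, Nat.mod_eq_of_lt hj, Nat.mod_eq_of_lt hj'] using this
  · have := congrArg (· / s) h
    simpa [Nat.add_mul_div_right _ _ hs, Nat.div_eq_of_lt hj, Nat.div_eq_of_lt hj'] using this

/-- In the labeling `f_ε` of `K_{1,s} × P_{2m+2}` (`s ≥ 3`, `m ≥ 1`): the
pendant edges receive the labels `{1, …, 2s}` with the labels at `v_0` summing
to `s(s+1)/2 + ε`, and the remaining edges are labeled by the explicit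
formulas.  Then the degree-2 vertex weights are `wt(a_i^j) = 4j + 4is − 1` and
`wt(b_i^j) = 4ms + 4j + 4is − 1`, hence they are pairwise distinct and all
congruent to `3` modulo `4`. -/
theorem degTwo_weights (s m ε : ℕ) (hs : 3 ≤ s) (hm : 1 ≤ m)
    (f : Sym2 (V16 s m) → ℕ)
    (hpend : Set.BijOn f
      {e : Sym2 (V16 s m) | ∃ j : Fin s,
        e = s(V16.a 0 j, V16.v 0) ∨ e = s(V16.b 0 j, V16.u 0)}
      (Set.Icc 1 (2 * s)))
    (hsum : ∑ j : Fin s, f s(V16.a 0 j, V16.v 0) = s * (s + 1) / 2 + ε)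
    (hva : ∀ (i : ℕ) (h1 : 1 ≤ i) (h2 : i ≤ m) (j : Fin s),
      f s(V16.v ⟨i - 1, by omega⟩, V16.a ⟨i, by omega⟩ j) =
        if Odd i then 2 * (j.1 + 1) - 1 + 2 * i * s
        else 2 * (j.1 + 1) + 2 * i * s)
    (hav : ∀ (i : ℕ) (h1 : 1 ≤ i) (h2 : i ≤ m) (j : Fin s),
      f s(V16.a ⟨i, by omega⟩ j, V16.v ⟨i, by omega⟩) =
        if Odd i then 2 * (j.1 + 1) + 2 * i * s
        else 2 * (j.1 + 1) - 1 + 2 * i * s)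
    (hub : ∀ (i : ℕ) (h1 : 1 ≤ i) (h2 : i ≤ m) (j : Fin s),
      f s(V16.u ⟨i - 1, by omega⟩, V16.b ⟨i, by omega⟩ j) =
        if Odd i then 2 * (j.1 + 1) - 1 + 2 * i * s + 2 * m * s
        else 2 * (j.1 + 1) + 2 * i * s + 2 * m * s)
    (hbu : ∀ (i : ℕ) (h1 : 1 ≤ i) (h2 : i ≤ m) (j : Fin s),
      f s(V16.b ⟨i, by omega⟩ j, V16.u ⟨i, by omega⟩) =
        if Odd i then 2 * (j.1 + 1) + 2 * i * s + 2 * m * s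
        else 2 * (j.1 + 1) - 1 + 2 * i * s + 2 * m * s) :
    (∀ (i : ℕ) (h1 : 1 ≤ i) (h2 : i ≤ m) (j : Fin s),
        vertexSum (G16 s m) f (V16.a ⟨i, by omega⟩ j) =
          4 * (j.1 + 1) + 4 * i * s - 1 ∧
        vertexSum (G16 s m) f (V16.b ⟨i, by omega⟩ j) =
          4 * m * s + 4 * (j.1 + 1) + 4 * i * s - 1) ∧
    Set.InjOn (vertexSum (G16 s m) f) (degTwo s m) ∧
    (∀ x ∈ degTwo s m, vertexSum (G16 s m) f x % 4 = 3) := by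
  have key : ∀ (i : ℕ) (h1 : 1 ≤ i) (h2 : i ≤ m) (j : Fin s),
      vertexSum (G16 s m) f (V16.a ⟨i, by omega⟩ j) =
        4 * (j.1 + 1) + 4 * i * s - 1 ∧
      vertexSum (G16 s m) f (V16.b ⟨i, by omega⟩ j) =
        4 * m * s + 4 * (j.1 + 1) + 4 * i * s - 1 := by
    intro i h1 h2 j
    have h4 : 4 * i * s = 2 * i * s + 2 * i * s := by ring
    have h4m : 4 * m * s = 2 * m * s + 2 * m * s := by ring
    constructor
    · rw [vsum_pair (G16 s m) f _ _ _ ?hne (incident_a i h1 h2 j)]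
      case hne =>
        intro hc
        simp only [Sym2.eq, Sym2.rel_iff', Prod.mk.injEq, Prod.swap_prod_mk, V16.v.injEq,
          Fin.mk.injEq, reduceCtorEq, and_false, false_and, or_false, V16.a.injEq,
          and_true] at hc
        omega
      rw [hav i h1 h2 j, Sym2.eq_swap, hva i h1 h2 j]
      by_cases ho : Odd i <;> simp only [ho, if_true, if_false] <;> omega
    · rw [vsum_pair (G16 s m) f _ _ _ ?hne (incident_b i h1 h2 j)]
      case hne =>
        intro hc
        simp only [Sym2.eq, Sym2.rel_iff', Prod.mk.injEq, Prod.swap_prod_mk, V16.u.injEq,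
          Fin.mk.injEq, reduceCtorEq, and_false, false_and, or_false, V16.b.injEq,
          and_true] at hc
        omega
      rw [hbu i h1 h2 j, Sym2.eq_swap, hub i h1 h2 j]
      by_cases ho : Odd i <;> simp only [ho, if_true, if_false] <;> omega
  refine ⟨key, ?_, ?_⟩
  · rintro x ⟨i, j, hi, hx⟩ y ⟨i', j', hi', hy⟩ hxy
    have him : i.1 ≤ m := by omega
    have him' : i'.1 ≤ m := by omega
    have his : i.1 * s ≤ m * s := Nat.mul_le_mul_right s him
    have his' : i'.1 * s ≤ m * s := Nat.mul_le_mul_right s him'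
    have hsi : s ≤ i.1 * s := Nat.le_mul_of_pos_left s hi
    have hsi' : s ≤ i'.1 * s := Nat.le_mul_of_pos_left s hi'
    have e4 : 4 * i.1 * s = 4 * (i.1 * s) := by ring
    have e4' : 4 * i'.1 * s = 4 * (i'.1 * s) := by ring
    have e4m : 4 * m * s = 4 * (m * s) := by ring
    have kx := key i.1 hi him j
    have ky := key i'.1 hi' him' j'
    simp only [Fin.eta] at kx ky
    have hjs : j.1 < s := j.2
    have hjs' : j'.1 < s := j'.2
    rcases hx with hx | hx <;> rcases hy with hy | hy <;> subst hx <;> subst hy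
    · rw [kx.1, ky.1, e4, e4'] at hxy
      have : j.1 + i.1 * s = j'.1 + i'.1 * s := by omega
      obtain ⟨hj, hi⟩ := key_inj (by omega) hjs hjs' this
      congr 1 <;> [exact Fin.ext hi; exact Fin.ext hj]
    · rw [kx.1, ky.2, e4, e4', e4m] at hxy; omega
    · rw [kx.2, ky.1, e4, e4', e4m] at hxy; omega
    · rw [kx.2, ky.2, e4, e4', e4m] at hxy

      have : j.1 + i.1 * s = j'.1 + i'.1 * s := by omega
      obtain ⟨hj, hi⟩ := key_inj (by omega) hjs hjs' this
      congr 1 <;> [exact Fin.ext hi; exact Fin.ext hj]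
  · rintro x ⟨i, j, hi, hx | hx⟩ <;> subst hx
    · have kx := (key i.1 hi (by omega) j).1
      simp only [Fin.eta] at kx
      rw [kx]
      have e4 : 4 * i.1 * s = 4 * (i.1 * s) := by ring
      omega
    · have kx := (key i.1 hi (by omega) j).2
      simp only [Fin.eta] at kx
      rw [kx]
      have e4 : 4 * i.1 * s = 4 * (i.1 * s) := by ring
      have e4m : 4 * m * s = 4 * (m * s) := by ring
      omega
end
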